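/- arXiv:math/0204035 — 5 statements merged into one kernel-verified Lean document; each statement's English description precedes it below -/
import Mathlib

section
/- Let c be a positive integer and t an integer. Then (1/c) ∑_{λ^c=1, λ≠1} λ^{-t}/(λ-1) = t/c - floor(t/c) - 1/2 + 1/(2c), where the sum is over all nontrivial c-th roots of unity in ℂ. -/
open Complex Finset

lemma sum_j_mul_pow {c : ℕ} {w : ℂ} (hw : w ^ c = 1) (hw1 : w ≠ 1) :
    ∑ j ∈ range c, (j : ℂ) * w ^ j = c / (w - 1) := by
  have hne : w - 1 ≠ 0 := sub_ne_zero.mpr hw1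
  have hgeom : ∑ j ∈ range c, w ^ j = 0 := by
    rw [geom_sum_eq hw1, hw, sub_self, zero_div]
  rw [eq_div_iff hne, mul_comm, sub_mul, one_mul, Finset.mul_sum]
  have h1 : ∀ j ∈ range c, w * ((j:ℂ) * w ^ j) = ((j:ℂ)+1) * w ^ (j+1) - w ^ (j+1) := by
    intros; ring
  rw [Finset.sum_congr rfl h1, Finset.sum_sub_distrib]
  have h2 : ∑ j ∈ range c, ((j : ℂ)+1) * w ^ (j+1)
      = ∑ j ∈ range c, (j : ℂ) * w ^ j + c * w ^ c := by
    have h3 := Finset.sum_range_succ' (fun j => (j : ℂ) * w ^ j) c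
    have h4 := Finset.sum_range_succ (fun j => (j : ℂ) * w ^ j) c
    simp only [Nat.cast_add, Nat.cast_one, Nat.cast_zero, zero_mul, add_zero] at h3 h4
    rw [← h3, h4]
  have h5 : ∑ j ∈ range c, w ^ (j+1) = w * ∑ j ∈ range c, w ^ j := by
    rw [Finset.mul_sum]; exact Finset.sum_congr rfl fun j _ => by ring
  rw [h2, h5, hgeom, hw, mul_zero, mul_one]
  ring

lemma zpow_sum_range {c : ℕ} {ζ : ℂ} (hζ : IsPrimitiveRoot ζ c) (m : ℤ) :
    ∑ k ∈ range c, (ζ ^ m) ^ k = if (c:ℤ) ∣ m then (c:ℂ) else 0 := by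
  by_cases h : (c:ℤ) ∣ m
  · rw [if_pos h, (hζ.zpow_eq_one_iff_dvd m).mpr h]
    simp
  · rw [if_neg h]
    have hne : ζ ^ m ≠ 1 := fun hh => h ((hζ.zpow_eq_one_iff_dvd m).mp hh)
    have hpow : (ζ ^ m) ^ c = 1 := by
      rw [← zpow_natCast, ← zpow_mul, mul_comm, zpow_mul, zpow_natCast, hζ.pow_eq_one, one_zpow]
    rw [geom_sum_eq hne, hpow, sub_self, zero_div]

theorem sawtooth_fourier_expansion (c : ℕ) (hc : 0 < c) (t : ℤ) :
    (1 / (c : ℂ)) * ∑ k ∈ Finset.Ico 1 c,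
        (Complex.exp (2 * Real.pi * Complex.I * k / c)) ^ (-t) /
          (Complex.exp (2 * Real.pi * Complex.I * k / c) - 1) =
      (t : ℂ) / c - (⌊(t : ℚ) / c⌋ : ℂ) - 1 / 2 + 1 / (2 * c) := by
  have hc0 : (c:ℂ) ≠ 0 := Nat.cast_ne_zero.mpr hc.ne'
  set ζ : ℂ := Complex.exp (2 * Real.pi * Complex.I / c) with hζdef
  have hprim : IsPrimitiveRoot ζ c := Complex.isPrimitiveRoot_exp c hc.ne'
  have hζ0 : ζ ≠ 0 := Complex.exp_ne_zero _
  have hζc : ζ ^ c = 1 := hprim.pow_eq_one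
  have hexp : ∀ k : ℕ, Complex.exp (2 * Real.pi * Complex.I * k / c) = ζ ^ k := by
    intro k
    rw [hζdef, ← Complex.exp_nat_mul]
    congr 1
    ring
  -- step 1: rewrite each term
  have step1 : ∀ k ∈ Finset.Ico 1 c,
      (Complex.exp (2 * Real.pi * Complex.I * k / c)) ^ (-t) /
          (Complex.exp (2 * Real.pi * Complex.I * k / c) - 1)
        = (1/(c:ℂ)) * ∑ j ∈ range c, (j:ℂ) * (ζ ^ ((j:ℤ) - t)) ^ k := by
    intro k hk
    rw [Finset.mem_Ico] at hk
    rw [hexp k]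
    set w : ℂ := ζ ^ k with hwdef
    have hw1 : w ≠ 1 := hprim.pow_ne_one_of_pos_of_lt (by omega) hk.2
    have hwc : w ^ c = 1 := by rw [hwdef, ← pow_mul, mul_comm, pow_mul, hζc, one_pow]
    have hw0 : w ≠ 0 := pow_ne_zero _ hζ0
    have hA := sum_j_mul_pow hwc hw1
    have hterm : ∀ j ∈ range c, (j:ℂ) * (ζ ^ ((j:ℤ) - t)) ^ k
        = ((j:ℂ) * w ^ j) * w ^ (-t) := by
      intro j _
      have : (ζ ^ ((j:ℤ) - t)) ^ k = w ^ ((j:ℤ) - t) := by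
        rw [hwdef, ← zpow_natCast (ζ ^ ((j:ℤ) - t)), ← zpow_mul, mul_comm, zpow_mul,
          zpow_natCast]
      rw [this, sub_eq_add_neg, zpow_add₀ hw0, zpow_natCast]
      ring
    rw [Finset.sum_congr rfl hterm, ← Finset.sum_mul, hA]
    have hne : w - 1 ≠ 0 := sub_ne_zero.mpr hw1
    field_simp
  rw [Finset.sum_congr rfl step1, ← Finset.mul_sum, Finset.sum_comm]
  -- inner sums
  have hins : ∀ j : ℕ, ∑ k ∈ Finset.Ico 1 c, (j:ℂ) * (ζ ^ ((j:ℤ) - t)) ^ k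
      = (j:ℂ) * ((if (c:ℤ) ∣ (j:ℤ) - t then (c:ℂ) else 0) - 1) := by
    intro j
    rw [← Finset.mul_sum]
    congr 1
    have hsplit : range c = insert 0 (Finset.Ico 1 c) := by
      ext x
      simp only [Finset.mem_range, Finset.mem_insert, Finset.mem_Ico]
      omega
    have h0 : (0:ℕ) ∉ Finset.Ico 1 c := by simp
    have := zpow_sum_range hprim ((j:ℤ) - t)
    rw [hsplit, Finset.sum_insert h0, pow_zero] at this
    linear_combination this
  rw [Finset.sum_congr rfl (fun j _ => hins j)]
  have hsplit2 : ∀ j ∈ range c, (j:ℂ) * ((if (c:ℤ) ∣ (j:ℤ) - t then (c:ℂ) else 0) - 1)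
      = (if (c:ℤ) ∣ (j:ℤ) - t then (j:ℂ)*(c:ℂ) else 0) - (j:ℂ) := by
    intro j _; split <;> ring
  rw [Finset.sum_congr rfl hsplit2, Finset.sum_sub_distrib]
  -- the singleton sum
  set j₀ : ℕ := (t % (c:ℤ)).toNat with hj₀def
  have hmodlt : t % (c:ℤ) < c := Int.emod_lt_of_pos t (by exact_mod_cast hc)
  have hmodnn : 0 ≤ t % (c:ℤ) := Int.emod_nonneg t (by exact_mod_cast hc.ne')
  have hj0z : (j₀:ℤ) = t % (c:ℤ) := Int.toNat_of_nonneg hmodnn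
  have hj0c : j₀ < c := by omega
  have hsum : ∑ j ∈ range c, (if (c:ℤ) ∣ (j:ℤ) - t then (j:ℂ)*(c:ℂ) else 0)
      = (j₀:ℂ) * (c:ℂ) := by
    rw [Finset.sum_eq_single_of_mem j₀ (Finset.mem_range.mpr hj0c)]
    · rw [if_pos ⟨-(t / (c:ℤ)), by rw [hj0z, Int.emod_def]; ring⟩]
    · intro j hj hne
      rw [Finset.mem_range] at hj
      rw [if_neg]
      intro hdvd
      have e1 : (j:ℤ) % c = t % c := by
        rw [Int.emod_eq_emod_iff_emod_sub_eq_zero]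
        exact Int.emod_eq_zero_of_dvd hdvd
      have e2 : (j:ℤ) % c = j := Int.emod_eq_of_lt (Int.ofNat_nonneg j)
        (by exact_mod_cast hj)
      have : (j:ℤ) = (j₀:ℤ) := by rw [← e2, e1, hj0z]
      exact hne (by exact_mod_cast this)
  have hGauss : ∑ j ∈ range c, (j:ℂ) = (c:ℂ) * ((c:ℂ) - 1) / 2 := by
    have h := Finset.sum_range_id_mul_two c
    have h' : (((∑ i ∈ range c, i) * 2 : ℕ):ℂ) = ((c * (c-1) : ℕ):ℂ) := by
      exact_mod_cast congrArg (Nat.cast : ℕ → ℂ) h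
    push_cast [Nat.cast_sub hc] at h'
    linear_combination h' / 2
  rw [hsum, hGauss]
  have hfloor : (⌊(t : ℚ) / c⌋ : ℂ) = ((t / (c:ℤ) : ℤ) : ℂ) := by
    rw [Rat.floor_intCast_div_natCast]
  have hj0 : (j₀:ℂ) = (t:ℂ) - (c:ℂ) * ((t / (c:ℤ) : ℤ) : ℂ) := by
    have h : (j₀:ℤ) = t - (c:ℤ) * (t / (c:ℤ)) := by rw [hj0z, Int.emod_def]
    exact_mod_cast h
  rw [hfloor, hj0]
  field_simp
  ring
end

section
/- Let a, b, c be pairwise coprime positive integers and t an integer. Then σ_t(a,b;c) = ∑_{m=0}^{c-1} ((a^{-1}(m-t)/c)) ((-b^{-1} m/c)) - 1/(4c), where a^{-1}, b^{-1} are inverses of a, b modulo c. -/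
open Complex Finset

/-- The sawtooth function `((x)) = x - ⌊x⌋ - 1/2`. -/
def saw (x : ℚ) : ℚ := x - ⌊x⌋ - 1 / 2

lemma saw_int_div (N : ℤ) (c : ℕ) (hc : 0 < c) :
    saw ((N : ℚ) / c) = ((N % (c : ℤ) : ℤ) : ℚ) / c - 1 / 2 := by
  have hc' : (c : ℚ) ≠ 0 := Nat.cast_ne_zero.mpr hc.ne'
  have h : N % (c : ℤ) = N - c * (N / c) := Int.emod_def N c
  unfold saw
  rw [Rat.floor_intCast_div_natCast, h]
  push_cast
  field_simp

lemma geom_zero (c : ℕ) (μ : ℂ) (h1 : μ ^ c = 1) (h2 : μ ≠ 1) :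
    ∑ i ∈ range c, μ ^ i = 0 := by
  rw [geom_sum_eq h2, h1]; simp

lemma keyA (c : ℕ) (μ : ℂ) (h1 : μ ^ c = 1) (h2 : μ ≠ 1) :
    ∑ j ∈ range c, (j : ℂ) * μ ^ j = c / (μ - 1) := by
  have hμ : μ - 1 ≠ 0 := sub_ne_zero.mpr h2
  rw [eq_div_iff hμ]
  have tele : ∑ j ∈ range c, (((j:ℂ)+1) * μ ^ (j+1) - (j:ℂ) * μ ^ j) = c * μ ^ c - 0 := by
    have := Finset.sum_range_sub (fun j => (j : ℂ) * μ ^ j) c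
    simpa using this
  have expand : ∀ j : ℕ, (j:ℂ) * μ ^ j * (μ - 1)
      = (((j:ℂ)+1) * μ ^ (j+1) - (j:ℂ) * μ ^ j) - μ ^ (j+1) := by
    intro j; ring
  calc (∑ j ∈ range c, (j : ℂ) * μ ^ j) * (μ - 1)
      = ∑ j ∈ range c, ((j:ℂ) * μ ^ j * (μ - 1)) := by rw [Finset.sum_mul]
    _ = ∑ j ∈ range c, ((((j:ℂ)+1) * μ ^ (j+1) - (j:ℂ) * μ ^ j) - μ ^ (j+1)) := by
        simp_rw [expand]
    _ = (c * μ ^ c - 0) - μ * ∑ j ∈ range c, μ ^ j := by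
        rw [Finset.sum_sub_distrib, tele, Finset.mul_sum]
        simp_rw [pow_succ']
    _ = c := by rw [geom_zero c μ h1 h2, h1]; ring

lemma orth (c : ℕ) (ζ : ℂ) (hζ : IsPrimitiveRoot ζ c) (N : ℤ) :
    ∑ k ∈ range c, (ζ ^ N) ^ k = if (c : ℤ) ∣ N then (c : ℂ) else 0 := by
  by_cases h : (c : ℤ) ∣ N
  · have h1 : ζ ^ N = 1 := (hζ.zpow_eq_one_iff_dvd N).mpr h
    simp [h1, h]
  · have hne : ζ ^ N ≠ 1 := fun he => h ((hζ.zpow_eq_one_iff_dvd N).mp he)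
    have h1 : (ζ ^ N) ^ c = 1 := by
      rw [← zpow_natCast (ζ ^ N) c, ← zpow_mul, mul_comm, zpow_mul, zpow_natCast,
        hζ.pow_eq_one, one_zpow]
    rw [geom_zero c _ h1 hne]; simp [h]

lemma emod_eq_of_cong (c : ℕ) (hc : 0 < c) (x y : ℤ) (h : (x : ZMod c) = (y : ZMod c))
    (h0 : 0 ≤ y) (h1 : y < (c : ℤ)) : x % (c : ℤ) = y := by
  rw [(ZMod.intCast_eq_intCast_iff' x y c).mp h, Int.emod_eq_of_lt h0 h1]

lemma emod_nonneg' (c : ℕ) (hc : 0 < c) (x : ℤ) : 0 ≤ x % (c : ℤ) :=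
  Int.emod_nonneg x (by exact_mod_cast hc.ne')

lemma emod_lt' (c : ℕ) (hc : 0 < c) (x : ℤ) : x % (c : ℤ) < (c : ℤ) :=
  Int.emod_lt_of_pos x (by exact_mod_cast hc)

lemma toNat_emod_lt (c : ℕ) (hc : 0 < c) (x : ℤ) : (x % (c : ℤ)).toNat < c := by
  have h1 := emod_lt' c hc x
  omega

lemma toNat_emod_cast (c : ℕ) (hc : 0 < c) (x : ℤ) :
    (((x % (c : ℤ)).toNat : ℤ)) = x % (c : ℤ) :=
  Int.toNat_of_nonneg (emod_nonneg' c hc x)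

lemma sumA (a c : ℕ) (a' t : ℤ) (hc : 0 < c)
    (haz : (a : ZMod c) * (a' : ZMod c) = 1) :
    ∑ m ∈ range c, (a' * ((m : ℤ) - t)) % (c : ℤ) = ∑ j ∈ range c, (j : ℤ) := by
  apply Finset.sum_nbij' (f := fun m : ℕ => (a' * ((m : ℤ) - t)) % (c : ℤ))
      (g := fun j : ℕ => (j : ℤ))
      (fun m => ((a' * ((m : ℤ) - t)) % (c : ℤ)).toNat)
      (fun j => (((a : ℤ) * j + t) % (c : ℤ)).toNat)
  · intro m _; simpa using toNat_emod_lt c hc _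
  · intro j _; simpa using toNat_emod_lt c hc _
  · intro m hm
    simp only [mem_range] at hm
    have h1 : ((a : ℤ) * (((a' * ((m : ℤ) - t)) % (c : ℤ)).toNat : ℤ) + t) % (c : ℤ)
        = (m : ℤ) := by
      rw [toNat_emod_cast c hc]
      apply emod_eq_of_cong c hc _ _ ?_ (by positivity) (by exact_mod_cast hm)
      push_cast [ZMod.intCast_mod]
      linear_combination (((m : ZMod c)) - ((t : ZMod c))) * haz
    rw [h1]; simp
  · intro j hj
    simp only [mem_range] at hj
    have h1 : (a' * (((((a : ℤ) * j + t) % (c : ℤ)).toNat : ℤ) - t)) % (c : ℤ) = (j : ℤ) := by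
      rw [toNat_emod_cast c hc]
      apply emod_eq_of_cong c hc _ _ ?_ (by positivity) (by exact_mod_cast hj)
      push_cast [ZMod.intCast_mod]
      linear_combination ((j : ZMod c)) * haz
    rw [h1]; simp
  · intro m _
    rw [toNat_emod_cast c hc]

lemma sumB (b c : ℕ) (b' : ℤ) (hc : 0 < c)
    (hbz : (b : ZMod c) * (b' : ZMod c) = 1) :
    ∑ m ∈ range c, (-b' * (m : ℤ)) % (c : ℤ) = ∑ j ∈ range c, (j : ℤ) := by
  apply Finset.sum_nbij' (f := fun m : ℕ => (-b' * (m : ℤ)) % (c : ℤ))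
      (g := fun j : ℕ => (j : ℤ))
      (fun m => ((-b' * (m : ℤ)) % (c : ℤ)).toNat)
      (fun j => ((-(b : ℤ) * j) % (c : ℤ)).toNat)
  · intro m _; simpa using toNat_emod_lt c hc _
  · intro j _; simpa using toNat_emod_lt c hc _
  · intro m hm
    simp only [mem_range] at hm
    have h1 : (-(b : ℤ) * (((-b' * (m : ℤ)) % (c : ℤ)).toNat : ℤ)) % (c : ℤ) = (m : ℤ) := by
      rw [toNat_emod_cast c hc]
      apply emod_eq_of_cong c hc _ _ ?_ (by positivity) (by exact_mod_cast hm)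
      push_cast [ZMod.intCast_mod]
      linear_combination ((m : ZMod c)) * hbz
    rw [h1]; simp
  · intro j hj
    simp only [mem_range] at hj
    have h1 : (-b' * (((-(b : ℤ) * j) % (c : ℤ)).toNat : ℤ)) % (c : ℤ) = (j : ℤ) := by
      rw [toNat_emod_cast c hc]
      apply emod_eq_of_cong c hc _ _ ?_ (by positivity) (by exact_mod_cast hj)
      push_cast [ZMod.intCast_mod]
      linear_combination ((j : ZMod c)) * hbz
    rw [h1]; simp
  · intro m _
    rw [toNat_emod_cast c hc]

lemma sumP (a b c : ℕ) (a' b' t : ℤ) (hc : 0 < c)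
    (haz : (a : ZMod c) * (a' : ZMod c) = 1)
    (hbz : (b : ZMod c) * (b' : ZMod c) = 1) :
    ∑ m ∈ range c, ((a' * ((m : ℤ) - t)) % (c : ℤ)) * ((-b' * (m : ℤ)) % (c : ℤ))
      = ∑ n ∈ range c, ((a' * (-t - (b : ℤ) * n)) % (c : ℤ)) * (n : ℤ) := by
  apply Finset.sum_nbij'
      (f := fun m : ℕ => ((a' * ((m : ℤ) - t)) % (c : ℤ)) * ((-b' * (m : ℤ)) % (c : ℤ)))
      (g := fun n : ℕ => ((a' * (-t - (b : ℤ) * n)) % (c : ℤ)) * (n : ℤ))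
      (fun m => ((-b' * (m : ℤ)) % (c : ℤ)).toNat)
      (fun n => ((-(b : ℤ) * n) % (c : ℤ)).toNat)
  · intro m _; simpa using toNat_emod_lt c hc _
  · intro n _; simpa using toNat_emod_lt c hc _
  · intro m hm
    simp only [mem_range] at hm
    have h1 : (-(b : ℤ) * (((-b' * (m : ℤ)) % (c : ℤ)).toNat : ℤ)) % (c : ℤ) = (m : ℤ) := by
      rw [toNat_emod_cast c hc]
      apply emod_eq_of_cong c hc _ _ ?_ (by positivity) (by exact_mod_cast hm)
      push_cast [ZMod.intCast_mod]
      linear_combination ((m : ZMod c)) * hbz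
    rw [h1]; simp
  · intro n hn
    simp only [mem_range] at hn
    have h1 : (-b' * (((-(b : ℤ) * n) % (c : ℤ)).toNat : ℤ)) % (c : ℤ) = (n : ℤ) := by
      rw [toNat_emod_cast c hc]
      apply emod_eq_of_cong c hc _ _ ?_ (by positivity) (by exact_mod_cast hn)
      push_cast [ZMod.intCast_mod]
      linear_combination ((n : ZMod c)) * hbz
    rw [h1]; simp
  · intro m _
    have h2 : (a' * (-t - (b : ℤ) * ((((-b' * (m : ℤ)) % (c : ℤ)).toNat : ℕ) : ℤ))) % (c : ℤ)
        = (a' * ((m : ℤ) - t)) % (c : ℤ) := by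
      rw [toNat_emod_cast c hc]
      apply (ZMod.intCast_eq_intCast_iff' _ _ _).mp
      push_cast [ZMod.intCast_mod]
      linear_combination ((a' : ZMod c) * (m : ZMod c)) * hbz
    rw [h2, toNat_emod_cast c hc]

lemma innerSumAux (a b c : ℕ) (a' t : ℤ) (hc : 0 < c)
    (haz : (a : ZMod c) * (a' : ZMod c) = 1) (n : ℕ) :
    ∑ m ∈ range c, ((m : ℂ) * (n : ℂ) *
        (if (c : ℤ) ∣ (t + (a : ℤ) * m + (b : ℤ) * n) then (c : ℂ) else 0))
      = (((a' * (-t - (b : ℤ) * n)) % (c : ℤ) : ℤ) : ℂ) * (n : ℂ) * (c : ℂ) := by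
  set m0 : ℕ := ((a' * (-t - (b : ℤ) * n)) % (c : ℤ)).toNat with hm0
  have hm0c : ((m0 : ℤ)) = (a' * (-t - (b : ℤ) * n)) % (c : ℤ) := toNat_emod_cast c hc _
  rw [Finset.sum_eq_single_of_mem m0 (mem_range.mpr (toNat_emod_lt c hc _))]
  · have hm0z : ((m0 : ℕ) : ZMod c) = ((a' * (-t - (b : ℤ) * n) : ℤ) : ZMod c) := by
      have h3 := congrArg (fun x : ℤ => (x : ZMod c)) hm0c
      simpa [ZMod.intCast_mod] using h3
    have hdvd : (c : ℤ) ∣ (t + (a : ℤ) * m0 + (b : ℤ) * n) := by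
      rw [← ZMod.intCast_zmod_eq_zero_iff_dvd]
      push_cast
      rw [show ((m0 : ℕ) : ZMod c) = ((a' * (-t - (b : ℤ) * n) : ℤ) : ZMod c) from hm0z]
      push_cast
      linear_combination (-(t : ZMod c) - (b : ZMod c) * (n : ZMod c)) * haz
    rw [if_pos hdvd, ← hm0c]
    push_cast
    ring
  · intro m hm hne
    rw [if_neg, mul_zero]
    intro hdvd
    apply hne
    have hm' : m < c := mem_range.mp hm
    have h1 : (m : ℤ) % (c : ℤ) = (a' * (-t - (b : ℤ) * n)) % (c : ℤ) := by
      apply (ZMod.intCast_eq_intCast_iff' _ _ _).mp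
      have hX : ((t + (a : ℤ) * m + (b : ℤ) * n : ℤ) : ZMod c) = 0 :=
        (ZMod.intCast_zmod_eq_zero_iff_dvd _ _).mpr hdvd
      push_cast at hX ⊢
      linear_combination (-(m : ZMod c)) * haz + (a' : ZMod c) * hX
    rw [Int.emod_eq_of_lt (by positivity) (by exact_mod_cast hm')] at h1
    omega

theorem fourier_dedekind_two_args_as_dedekind_rademacher (a b c : ℕ)
    (ha : 0 < a) (hb : 0 < b) (hc : 0 < c)
    (hab : Nat.Coprime a b) (hac : Nat.Coprime a c) (hbc : Nat.Coprime b c)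
    (a' b' t : ℤ) (ha' : (a : ℤ) * a' ≡ 1 [ZMOD (c : ℤ)])
    (hb' : (b : ℤ) * b' ≡ 1 [ZMOD (c : ℤ)]) :
    (1 / (c : ℂ)) * ∑ k ∈ Finset.Ico 1 c,
        (Complex.exp (2 * Real.pi * Complex.I * k / c)) ^ t /
          (((Complex.exp (2 * Real.pi * Complex.I * k / c)) ^ (a : ℤ) - 1) *
            ((Complex.exp (2 * Real.pi * Complex.I * k / c)) ^ (b : ℤ) - 1)) =
      ((∑ m ∈ Finset.range c,
          saw ((a' : ℚ) * ((m : ℚ) - t) / c) * saw (-(b' : ℚ) * m / c) : ℚ) : ℂ)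
        - 1 / (4 * c) := by
  have hcC : (c : ℂ) ≠ 0 := Nat.cast_ne_zero.mpr hc.ne'
  have hcQ : (c : ℚ) ≠ 0 := Nat.cast_ne_zero.mpr hc.ne'
  have haz : (a : ZMod c) * (a' : ZMod c) = 1 := by
    have h := (ZMod.intCast_eq_intCast_iff _ _ _).mpr ha'
    push_cast at h; exact h
  have hbz : (b : ZMod c) * (b' : ZMod c) = 1 := by
    have h := (ZMod.intCast_eq_intCast_iff _ _ _).mpr hb'
    push_cast at h; exact h
  set ζ : ℂ := Complex.exp (2 * Real.pi * Complex.I / c) with hζdef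
  have hζ : IsPrimitiveRoot ζ c := Complex.isPrimitiveRoot_exp c hc.ne'
  have hζ0 : ζ ≠ 0 := Complex.exp_ne_zero _
  have hexp : ∀ k : ℕ, Complex.exp (2 * Real.pi * Complex.I * k / c) = ζ ^ k := by
    intro k; rw [hζdef, ← Complex.exp_nat_mul]; ring_nf
  have epow : ∀ (x : ℤ) (k : ℕ), (ζ ^ x) ^ k = ζ ^ (x * k) := fun x k => by
    rw [← zpow_natCast (ζ ^ x) k, ← zpow_mul]
  set W : ℂ := ζ ^ t with hW
  set PZ : ℤ := ∑ n ∈ range c, ((a' * (-t - (b : ℤ) * n)) % (c : ℤ)) * (n : ℤ) with hPZ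
  set KZ : ℤ := ∑ j ∈ range c, (j : ℤ) with hKZdef
  -- step 1: per-term rewrite of the complex sum
  have hterm : ∀ k ∈ Ico 1 c,
      (ζ ^ k) ^ t / (((ζ ^ k) ^ (a : ℤ) - 1) * ((ζ ^ k) ^ (b : ℤ) - 1))
        = W ^ k * (∑ j ∈ range c, (j : ℂ) * ((ζ ^ a) ^ k) ^ j)
            * (∑ j ∈ range c, (j : ℂ) * ((ζ ^ b) ^ k) ^ j) / (c : ℂ) ^ 2 := by
    intro k hk
    obtain ⟨hk1, hkc⟩ := mem_Ico.mp hk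
    have hu1 : (ζ ^ a) ^ k ≠ 1 := by
      rw [← pow_mul]
      intro h
      have h2 : c ∣ a * k := hζ.dvd_of_pow_eq_one _ h
      have h3 : c ∣ k := Nat.Coprime.dvd_of_dvd_mul_left hac.symm h2
      have := Nat.le_of_dvd (by omega) h3; omega
    have hv1 : (ζ ^ b) ^ k ≠ 1 := by
      rw [← pow_mul]
      intro h
      have h2 : c ∣ b * k := hζ.dvd_of_pow_eq_one _ h
      have h3 : c ∣ k := Nat.Coprime.dvd_of_dvd_mul_left hbc.symm h2
      have := Nat.le_of_dvd (by omega) h3; omega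
    have huc : ((ζ ^ a) ^ k) ^ c = 1 := by
      rw [← pow_mul, ← pow_mul, show a * (k * c) = c * (a * k) by ring, pow_mul,
        hζ.pow_eq_one, one_pow]
    have hvc : ((ζ ^ b) ^ k) ^ c = 1 := by
      rw [← pow_mul, ← pow_mul, show b * (k * c) = c * (b * k) by ring, pow_mul,
        hζ.pow_eq_one, one_pow]
    have e1 : (ζ ^ k) ^ (a : ℤ) = (ζ ^ a) ^ k := by
      rw [zpow_natCast, ← pow_mul, mul_comm, pow_mul]
    have e2 : (ζ ^ k) ^ (b : ℤ) = (ζ ^ b) ^ k := by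
      rw [zpow_natCast, ← pow_mul, mul_comm, pow_mul]
    have e3 : (ζ ^ k) ^ t = W ^ k := by
      rw [hW, ← zpow_natCast ζ k, ← zpow_mul, mul_comm, zpow_mul, zpow_natCast]
    rw [e1, e2, e3, keyA c _ huc hu1, keyA c _ hvc hv1]
    have hu0 : (ζ ^ a) ^ k - 1 ≠ 0 := sub_ne_zero.mpr hu1
    have hv0 : (ζ ^ b) ^ k - 1 ≠ 0 := sub_ne_zero.mpr hv1
    field_simp
  -- pointwise exponent juggling
  have hpt : ∀ k m n : ℕ, ((m : ℂ) * ((ζ ^ a) ^ k) ^ m) * ((n : ℂ) * ((ζ ^ b) ^ k) ^ n) * W ^ k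
      = (m : ℂ) * (n : ℂ) * (ζ ^ (t + (a : ℤ) * m + (b : ℤ) * n)) ^ k := by
    intro k m n
    have h1 : ((ζ ^ a) ^ k) ^ m = ζ ^ ((a : ℤ) * k * m) := by
      rw [← zpow_natCast ζ a, epow, epow]
    have h2 : ((ζ ^ b) ^ k) ^ n = ζ ^ ((b : ℤ) * k * n) := by
      rw [← zpow_natCast ζ b, epow, epow]
    have h3 : W ^ k = ζ ^ (t * k) := epow t k
    have h4 : ζ ^ ((a : ℤ) * k * m) * ζ ^ ((b : ℤ) * k * n) * ζ ^ (t * k)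
        = ζ ^ ((t + (a : ℤ) * m + (b : ℤ) * n) * k) := by
      rw [← zpow_add₀ hζ0, ← zpow_add₀ hζ0]; congr 1; push_cast; ring
    rw [h1, h2, h3, epow (t + (a : ℤ) * m + (b : ℤ) * n) k, ← h4]
    ring
  -- the main double-sum computation
  have hrange : ∑ k ∈ range c, (W ^ k * (∑ j ∈ range c, (j : ℂ) * ((ζ ^ a) ^ k) ^ j)
        * (∑ j ∈ range c, (j : ℂ) * ((ζ ^ b) ^ k) ^ j))
      = (c : ℂ) * (PZ : ℂ) := by
    calc ∑ k ∈ range c, (W ^ k * (∑ j ∈ range c, (j : ℂ) * ((ζ ^ a) ^ k) ^ j)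
          * (∑ j ∈ range c, (j : ℂ) * ((ζ ^ b) ^ k) ^ j))
        = ∑ k ∈ range c, ∑ m ∈ range c, ∑ n ∈ range c,
            (m : ℂ) * (n : ℂ) * (ζ ^ (t + (a : ℤ) * m + (b : ℤ) * n)) ^ k := by
          refine sum_congr rfl fun k _ => ?_
          rw [show W ^ k * (∑ j ∈ range c, (j : ℂ) * ((ζ ^ a) ^ k) ^ j)
              * (∑ j ∈ range c, (j : ℂ) * ((ζ ^ b) ^ k) ^ j)
              = (∑ j ∈ range c, (j : ℂ) * ((ζ ^ a) ^ k) ^ j)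
                * (∑ j ∈ range c, (j : ℂ) * ((ζ ^ b) ^ k) ^ j) * W ^ k by ring,
            Finset.sum_mul_sum, Finset.sum_mul]
          refine sum_congr rfl fun m _ => ?_
          rw [Finset.sum_mul]
          exact sum_congr rfl fun n _ => hpt k m n
      _ = ∑ m ∈ range c, ∑ n ∈ range c, ∑ k ∈ range c,
            (m : ℂ) * (n : ℂ) * (ζ ^ (t + (a : ℤ) * m + (b : ℤ) * n)) ^ k := by
          rw [Finset.sum_comm]
          exact sum_congr rfl fun m _ => Finset.sum_comm
      _ = ∑ m ∈ range c, ∑ n ∈ range c, (m : ℂ) * (n : ℂ) *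
            (if (c : ℤ) ∣ (t + (a : ℤ) * m + (b : ℤ) * n) then (c : ℂ) else 0) := by
          refine sum_congr rfl fun m _ => sum_congr rfl fun n _ => ?_
          rw [← Finset.mul_sum, orth c ζ hζ]
      _ = ∑ n ∈ range c, ∑ m ∈ range c, (m : ℂ) * (n : ℂ) *
            (if (c : ℤ) ∣ (t + (a : ℤ) * m + (b : ℤ) * n) then (c : ℂ) else 0) :=
          Finset.sum_comm
      _ = ∑ n ∈ range c, (((a' * (-t - (b : ℤ) * n)) % (c : ℤ) : ℤ) : ℂ) * (n : ℂ) * (c : ℂ) :=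
          sum_congr rfl fun n _ => innerSumAux a b c a' t hc haz n
      _ = (c : ℂ) * (PZ : ℂ) := by
          rw [hPZ]
          push_cast
          rw [Finset.mul_sum]
          exact sum_congr rfl fun n _ => by ring
  -- sawtooth side
  have hsaw1 : ∀ m : ℕ, saw ((a' : ℚ) * ((m : ℚ) - t) / c)
      = (((a' * ((m : ℤ) - t)) % (c : ℤ) : ℤ) : ℚ) / c - 1 / 2 := by
    intro m
    have h : (a' : ℚ) * ((m : ℚ) - t) / c = ((a' * ((m : ℤ) - t) : ℤ) : ℚ) / c := by
      push_cast; ring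
    rw [h, saw_int_div _ c hc]
  have hsaw2 : ∀ m : ℕ, saw (-(b' : ℚ) * m / c)
      = (((-b' * (m : ℤ)) % (c : ℤ) : ℤ) : ℚ) / c - 1 / 2 := by
    intro m
    have h : -(b' : ℚ) * m / c = ((-b' * (m : ℤ) : ℤ) : ℚ) / c := by
      push_cast; ring
    rw [h, saw_int_div _ c hc]
  have hQ : (∑ m ∈ Finset.range c,
        saw ((a' : ℚ) * ((m : ℚ) - t) / c) * saw (-(b' : ℚ) * m / c) : ℚ)
      = (PZ : ℚ) / c ^ 2 - (KZ : ℚ) / (2 * c) - (KZ : ℚ) / (2 * c) + c / 4 := by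
    calc (∑ m ∈ Finset.range c,
          saw ((a' : ℚ) * ((m : ℚ) - t) / c) * saw (-(b' : ℚ) * m / c) : ℚ)
        = ∑ m ∈ range c,
            (((((a' * ((m : ℤ) - t)) % (c : ℤ) : ℤ) : ℚ)
              * (((-b' * (m : ℤ)) % (c : ℤ) : ℤ) : ℚ)) / c ^ 2
            - (((a' * ((m : ℤ) - t)) % (c : ℤ) : ℤ) : ℚ) / (2 * c)
            - (((-b' * (m : ℤ)) % (c : ℤ) : ℤ) : ℚ) / (2 * c) + 1 / 4) := by
          refine sum_congr rfl fun m _ => ?_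
          rw [hsaw1 m, hsaw2 m]
          field_simp
          ring
      _ = ((∑ m ∈ range c, ((a' * ((m : ℤ) - t)) % (c : ℤ)) * ((-b' * (m : ℤ)) % (c : ℤ))
              : ℤ) : ℚ) / c ^ 2
          - ((∑ m ∈ range c, (a' * ((m : ℤ) - t)) % (c : ℤ) : ℤ) : ℚ) / (2 * c)
          - ((∑ m ∈ range c, (-b' * (m : ℤ)) % (c : ℤ) : ℤ) : ℚ) / (2 * c) + c / 4 := by
          rw [sum_add_distrib, sum_sub_distrib, sum_sub_distrib, ← sum_div, ← sum_div, ← sum_div]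
          push_cast
          congr 1
          rw [Finset.sum_const, card_range, nsmul_eq_mul]
          ring
      _ = (PZ : ℚ) / c ^ 2 - (KZ : ℚ) / (2 * c) - (KZ : ℚ) / (2 * c) + c / 4 := by
          rw [sumP a b c a' b' t hc haz hbz, sumA a c a' t hc haz, sumB b c b' hc hbz,
            ← hPZ, ← hKZdef]
  -- value of KZ
  have hKval : (KZ : ℂ) * 2 = c * (c - 1) := by
    have h1 := Finset.sum_range_id_mul_two c
    have h2 := congrArg (Nat.cast : ℕ → ℂ) h1
    push_cast [Nat.cast_sub hc] at h2
    rw [hKZdef]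
    push_cast
    linear_combination h2
  -- assemble
  have hsum1 : ∑ k ∈ Finset.Ico 1 c,
      (Complex.exp (2 * Real.pi * Complex.I * k / c)) ^ t /
        (((Complex.exp (2 * Real.pi * Complex.I * k / c)) ^ (a : ℤ) - 1) *
          ((Complex.exp (2 * Real.pi * Complex.I * k / c)) ^ (b : ℤ) - 1))
      = ((c : ℂ) * (PZ : ℂ) - (KZ : ℂ) * (KZ : ℂ)) / (c : ℂ) ^ 2 := by
    calc ∑ k ∈ Finset.Ico 1 c,
        (Complex.exp (2 * Real.pi * Complex.I * k / c)) ^ t /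
          (((Complex.exp (2 * Real.pi * Complex.I * k / c)) ^ (a : ℤ) - 1) *
            ((Complex.exp (2 * Real.pi * Complex.I * k / c)) ^ (b : ℤ) - 1))
        = ∑ k ∈ Finset.Ico 1 c, (W ^ k * (∑ j ∈ range c, (j : ℂ) * ((ζ ^ a) ^ k) ^ j)
            * (∑ j ∈ range c, (j : ℂ) * ((ζ ^ b) ^ k) ^ j)) / (c : ℂ) ^ 2 := by
          refine sum_congr rfl fun k hk => ?_
          rw [hexp k]
          exact hterm k hk
      _ = (∑ k ∈ Finset.Ico 1 c, (W ^ k * (∑ j ∈ range c, (j : ℂ) * ((ζ ^ a) ^ k) ^ j)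
            * (∑ j ∈ range c, (j : ℂ) * ((ζ ^ b) ^ k) ^ j))) / (c : ℂ) ^ 2 := by
          rw [Finset.sum_div]
      _ = ((c : ℂ) * (PZ : ℂ) - (KZ : ℂ) * (KZ : ℂ)) / (c : ℂ) ^ 2 := by
          congr 1
          have hsplit : ∑ k ∈ range c, (W ^ k * (∑ j ∈ range c, (j : ℂ) * ((ζ ^ a) ^ k) ^ j)
              * (∑ j ∈ range c, (j : ℂ) * ((ζ ^ b) ^ k) ^ j))
              = (W ^ 0 * (∑ j ∈ range c, (j : ℂ) * ((ζ ^ a) ^ 0) ^ j)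
                * (∑ j ∈ range c, (j : ℂ) * ((ζ ^ b) ^ 0) ^ j))
              + ∑ k ∈ Finset.Ico 1 c, (W ^ k * (∑ j ∈ range c, (j : ℂ) * ((ζ ^ a) ^ k) ^ j)
                * (∑ j ∈ range c, (j : ℂ) * ((ζ ^ b) ^ k) ^ j)) := by
            rw [range_eq_Ico]
            exact Finset.sum_eq_sum_Ico_succ_bot hc _
          have hG0 : (W ^ 0 * (∑ j ∈ range c, (j : ℂ) * ((ζ ^ a) ^ 0) ^ j)
              * (∑ j ∈ range c, (j : ℂ) * ((ζ ^ b) ^ 0) ^ j)) = (KZ : ℂ) * (KZ : ℂ) := by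
            rw [hKZdef]
            push_cast
            simp
          rw [hrange, hG0] at hsplit
          linear_combination -hsplit
  rw [hsum1, hQ]
  have hKZC : (KZ : ℂ) = ((c : ℂ) * c - c) / 2 := by
    rw [eq_div_iff (two_ne_zero)]
    linear_combination hKval
  have hfin : ∀ x pz : ℂ, x ≠ 0 →
      1 / x * ((x * pz - (x * x - x) / 2 * ((x * x - x) / 2)) / x ^ 2)
        = (pz / x ^ 2 - (x * x - x) / 2 / (2 * x) - (x * x - x) / 2 / (2 * x) + x / 4)
          - 1 / (4 * x) := by
    intro x pz hx
    have h1 : x * x⁻¹ = 1 := mul_inv_cancel₀ hx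
    field_simp
    ring
  push_cast
  rw [hKZC]
  exact hfin (c : ℂ) (PZ : ℂ) hcC
end

section
/- For positive integers a and c with gcd(a,c)=1, σ_0(a,1;c) := (1/c) ∑_{λ^c=1, λ≠1} 1/((λ^a - 1)(λ-1)) = 1/4 - 1/(4c) - s(a,c), where s(a,c) is the classical Dedekind sum s(a,c) = ∑_{k=1}^{c-1} ((k/c))((ka/c)). -/
open Complex Finset

/-- The classical sawtooth function: `((x)) = x - ⌊x⌋ - 1/2` for `x ∉ ℤ`, and `0` for `x ∈ ℤ`. -/
def sawZ (x : ℚ) : ℚ := if x.den = 1 then 0 else x - ⌊x⌋ - 1 / 2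

/-- The classical Dedekind sum `s(a,c) = ∑_{k=1}^{c-1} ((k/c))((ka/c))`. -/
def dedekindSum (a c : ℕ) : ℚ :=
  ∑ k ∈ Finset.Ico 1 c, sawZ ((k : ℚ) / c) * sawZ ((k : ℚ) * a / c)

-- sawtooth evaluation
lemma sawZ_eq (N c : ℕ) (hc : 0 < c) (hr : N % c ≠ 0) :
    sawZ ((N : ℚ) / c) = ((N % c : ℕ) : ℚ) / c - 1 / 2 := by
  set q := N / c with hq
  set r := N % c with hrdef
  have hN : N = c * q + r := (Nat.div_add_mod N c).symm
  have hrc : r < c := Nat.mod_lt _ hc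
  have hc0 : (c : ℚ) ≠ 0 := by positivity
  have hx : (N : ℚ) / c = (q : ℚ) + (r : ℚ) / c := by
    rw [hN]; push_cast; field_simp
  have h01 : 0 < (r : ℚ) / c ∧ (r : ℚ) / c < 1 := by
    constructor
    · apply div_pos
      · exact_mod_cast Nat.pos_of_ne_zero hr
      · exact_mod_cast hc
    · rw [div_lt_one (by exact_mod_cast hc)]
      exact_mod_cast hrc
  have hfloor : ⌊(N : ℚ) / c⌋ = q := by
    rw [hx]
    rw [show ((q : ℚ)) = ((q : ℤ) : ℚ) by push_cast; ring]
    rw [Int.floor_intCast_add, Int.floor_eq_zero_iff.2 ⟨le_of_lt h01.1, h01.2⟩]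
    simp
  have hden : ((N : ℚ) / c).den ≠ 1 := by
    intro hd
    have h2 := (Rat.den_eq_one_iff _).1 hd
    -- (num : ℚ) = N/c
    set x := (N : ℚ) / c
    have : (r : ℚ) / c = ((x.num - q : ℤ) : ℚ) := by
      push_cast
      rw [h2, hx]; ring
    rw [this] at h01
    have h1 : (0 : ℤ) < x.num - q := by exact_mod_cast h01.1
    have h2' : (x.num - q : ℤ) < 1 := by exact_mod_cast h01.2
    omega
  rw [sawZ, if_neg hden, hfloor, hx]
  push_cast
  ring

lemma aux1 (c : ℕ) (μ : ℂ) (hμc : μ ^ c = 1) (hμ : μ ≠ 1) :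
    (μ - 1) * ∑ m ∈ range c, (m : ℂ) * μ ^ m = c := by
  have h0 : ∑ m ∈ range c, μ ^ m = 0 := by
    rw [geom_sum_eq hμ, hμc, sub_self, zero_div]
  have h1 : (μ - 1) * ∑ m ∈ range c, (m : ℂ) * μ ^ m
      = (∑ m ∈ range c, (((m:ℂ)+1) * μ ^ (m+1) - (m:ℂ) * μ ^ m))
        - μ * ∑ m ∈ range c, μ ^ m := by
    rw [Finset.mul_sum, Finset.mul_sum, ← Finset.sum_sub_distrib]
    apply Finset.sum_congr rfl
    intro m _
    ring
  rw [h1, h0, mul_zero, sub_zero]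
  have h2 := Finset.sum_range_sub (fun m => (m : ℕ) * μ ^ m : ℕ → ℂ) c
  push_cast at h2
  rw [h2, hμc]
  simp

lemma aux2 (c : ℕ) (ζ : ℂ) (h : IsPrimitiveRoot ζ c) (j : ℕ) :
    ∑ k ∈ range c, ζ ^ (j * k) = if c ∣ j then (c : ℂ) else 0 := by
  split_ifs with hd
  · obtain ⟨e, rfl⟩ := hd
    have : ∀ k ∈ range c, ζ ^ (c * e * k) = 1 := by
      intro k _
      rw [show c * e * k = c * (e * k) by ring, pow_mul, h.pow_eq_one, one_pow]
    rw [Finset.sum_congr rfl this]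
    simp
  · have hne : ζ ^ j ≠ 1 := fun hh => hd (h.dvd_of_pow_eq_one j hh)
    have : ∑ k ∈ range c, ζ ^ (j * k) = ∑ k ∈ range c, (ζ ^ j) ^ k := by
      apply Finset.sum_congr rfl; intro k _; rw [← pow_mul]
    rw [this, geom_sum_eq hne, ← pow_mul, mul_comm j c, pow_mul, h.pow_eq_one]
    simp

-- bijection lemma
lemma aux3 {M : Type*} [AddCommMonoid M] (a b c : ℕ) (hab : a * b % c = 1) (hc : 1 < c)
    (f : ℕ → M) : ∑ k ∈ range c, f (a * k % c) = ∑ k ∈ range c, f k := by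
  have hba : b * a % c = 1 := by rwa [mul_comm] at hab
  have key : ∀ u v k : ℕ, u * v % c = 1 → k < c → u * (v * k % c) % c = k := by
    intro u v k huv hk
    have h1 : u * (v * k % c) ≡ u * (v * k) [MOD c] :=
      (Nat.ModEq.refl u).mul (Nat.mod_modEq (v * k) c)
    have h2 : u * (v * k) ≡ 1 * k [MOD c] := by
      have : u * v ≡ 1 [MOD c] := by
        unfold Nat.ModEq
        rw [huv, Nat.mod_eq_of_lt hc]
      calc u * (v * k) = (u * v) * k := by ring
        _ ≡ 1 * k [MOD c] := this.mul_right k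
    have := h1.trans h2
    unfold Nat.ModEq at this
    rwa [one_mul, Nat.mod_eq_of_lt hk] at this
  apply Finset.sum_nbij' (i := fun k => a * k % c) (j := fun k => b * k % c)
  · intro k hk; exact Finset.mem_range.2 (Nat.mod_lt _ (by omega))
  · intro k hk; exact Finset.mem_range.2 (Nat.mod_lt _ (by omega))
  · intro k hk; exact key b a k hba (Finset.mem_range.1 hk)
  · intro k hk; exact key a b k hab (Finset.mem_range.1 hk)
  · intro k _; rfl

-- a*k % c ≠ 0
lemma aux4 (a c k : ℕ) (hac : Nat.Coprime a c) (hk : k ∈ Finset.Ico 1 c) :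
    a * k % c ≠ 0 := by
  rw [Finset.mem_Ico] at hk
  intro h
  have hd : c ∣ a * k := Nat.dvd_of_mod_eq_zero h
  have : c ∣ k := (Nat.Coprime.dvd_of_dvd_mul_left (Nat.Coprime.symm hac) hd)
  have := Nat.le_of_dvd (by omega) this
  omega

lemma final_algebra (c : ℕ) (hc : 1 < c) (T : ℂ) :
    (1/(c:ℂ)) * (((c:ℂ)*((c:ℂ)*((c:ℂ)-1)/2) - T)/c - ((c:ℂ)*((c:ℂ)-1)/2)^2/(c:ℂ)^2)
      = 1/4 - 1/(4*(c:ℂ)) - (T/(c:ℂ)^2 - ((c:ℂ)-1)/4) := by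
  have hc0 : (c:ℂ) ≠ 0 := by exact_mod_cast (by omega : (c:ℕ) ≠ 0)
  have h1 : (c:ℂ) * (c:ℂ)⁻¹ = 1 := mul_inv_cancel₀ hc0
  field_simp
  ring

theorem step1 (a c : ℕ) (hc : 1 < c) (hac : Nat.Coprime a c)
    (hb : ∃ b, a * b % c = 1) :
    dedekindSum a c = (∑ k ∈ Ico 1 c, (k : ℚ) * ((a * k % c : ℕ) : ℚ)) / c ^ 2 - ((c : ℚ) - 1) / 4 := by
  obtain ⟨b, hab⟩ := hb
  have hc0 : (c : ℚ) ≠ 0 := by exact_mod_cast (by omega : (c:ℕ) ≠ 0)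
  have hterm : ∀ k ∈ Ico 1 c, sawZ ((k:ℚ)/c) * sawZ ((k:ℚ)*a/c)
      = ((k:ℚ)/c - 1/2) * (((a*k%c : ℕ):ℚ)/c - 1/2) := by
    intro k hk
    have hk' := Finset.mem_Ico.1 hk
    have h1 : sawZ ((k:ℚ)/c) = ((k % c : ℕ):ℚ)/c - 1/2 :=
      sawZ_eq k c (by omega) (by rw [Nat.mod_eq_of_lt hk'.2]; omega)
    rw [Nat.mod_eq_of_lt hk'.2] at h1
    have h2pre : (k:ℚ)*a/c = ((k*a : ℕ):ℚ)/c := by push_cast; ring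
    rw [h1, h2pre, sawZ_eq (k*a) c (by omega) (by rw [mul_comm]; exact aux4 a c k hac hk),
      mul_comm k a]
  rw [dedekindSum, Finset.sum_congr rfl hterm]
  have hGn : (∑ k ∈ range c, k) * 2 = c * (c - 1) := Finset.sum_range_id_mul_two c
  have hG : (∑ k ∈ Ico 1 c, (k:ℚ)) = (c:ℚ) * ((c:ℚ) - 1) / 2 := by
    have h0 : (∑ k ∈ Ico 0 c, (k:ℚ)) = (0:ℚ) + ∑ k ∈ Ico 1 c, (k:ℚ) :=
      Finset.sum_eq_sum_Ico_succ_bot (by omega) _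
    have h1 : (∑ k ∈ range c, (k:ℚ)) = ∑ k ∈ Ico 1 c, (k:ℚ) := by
      rw [Finset.range_eq_Ico, h0, zero_add]
    rw [← h1]
    have : ((∑ k ∈ range c, k : ℕ) : ℚ) * 2 = (c:ℚ) * ((c:ℚ) - 1) := by
      rw [← Nat.cast_ofNat, ← Nat.cast_mul, hGn]
      push_cast [Nat.cast_sub (by omega : 1 ≤ c)]
      ring
    push_cast at this
    linarith
  have hR : (∑ k ∈ Ico 1 c, ((a*k%c : ℕ):ℚ)) = ∑ k ∈ Ico 1 c, (k:ℚ) := by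
    have h0 := aux3 a b c hab hc (fun k => (k:ℚ))
    have e1 : (∑ k ∈ range c, ((a*k%c : ℕ):ℚ))
        = ((a*0%c : ℕ):ℚ) + ∑ k ∈ Ico 1 c, ((a*k%c : ℕ):ℚ) := by
      rw [Finset.range_eq_Ico]
      exact Finset.sum_eq_sum_Ico_succ_bot (by omega) _
    have e2 : (∑ k ∈ range c, (k:ℚ)) = (0:ℚ) + ∑ k ∈ Ico 1 c, (k:ℚ) := by
      rw [Finset.range_eq_Ico]
      exact Finset.sum_eq_sum_Ico_succ_bot (by omega) _
    simp only [Nat.mul_zero, Nat.zero_mod, Nat.cast_zero, zero_add] at e1 e2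
    rw [← e1, ← e2] at *
    rw [h0]
  have expand : ∀ x r : ℚ, (x/c - 1/2)*(r/c - 1/2)
      = (x*r)/(c:ℚ)^2 - x/(2*c) - r/(2*c) + 1/4 := by
    intro x r
    field_simp
    ring
  rw [Finset.sum_congr rfl (fun (k : ℕ) (_ : k ∈ Ico 1 c) => expand (k:ℚ) ((a*k%c : ℕ):ℚ))]
  rw [Finset.sum_add_distrib, Finset.sum_sub_distrib, Finset.sum_sub_distrib,
    ← Finset.sum_div, ← Finset.sum_div, ← Finset.sum_div, hR, hG]
  rw [Finset.sum_const, Nat.card_Ico]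
  have hcard : ((c - 1 : ℕ) : ℚ) = (c:ℚ) - 1 := by
    push_cast [Nat.cast_sub (by omega : 1 ≤ c)]; ring
  rw [nsmul_eq_mul, hcard]
  field_simp
  ring

theorem step2 (a c : ℕ) (hc : 1 < c) (hac : Nat.Coprime a c)
    (hb : ∃ b, a * b % c = 1) :
    ∑ k ∈ Finset.Ico 1 c,
        1 / (((Complex.exp (2 * Real.pi * Complex.I * k / c)) ^ (a : ℕ) - 1) *
              (Complex.exp (2 * Real.pi * Complex.I * k / c) - 1)) =
      ((c:ℂ) * ((c:ℂ) * ((c:ℂ)-1)/2) - ∑ k ∈ Ico 1 c, (k : ℂ) * ((a * k % c : ℕ) : ℂ)) / c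
        - ((c:ℂ) * ((c:ℂ)-1)/2)^2 / c^2 := by
  obtain ⟨b, hab⟩ := hb
  have hcn : c ≠ 0 := by omega
  have hc0 : (c:ℂ) ≠ 0 := by exact_mod_cast hcn
  set ζ : ℂ := Complex.exp (2 * (Real.pi : ℂ) * Complex.I / c) with hζ
  have hprim : IsPrimitiveRoot ζ c := Complex.isPrimitiveRoot_exp c hcn
  have hexp : ∀ k : ℕ, Complex.exp (2 * (Real.pi : ℂ) * Complex.I * k / c) = ζ ^ k := by
    intro k
    rw [hζ, ← Complex.exp_nat_mul]
    congr 1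
    ring
  have hpowc : ∀ j : ℕ, (ζ^j)^c = 1 := by
    intro j
    rw [← pow_mul, mul_comm, pow_mul, hprim.pow_eq_one, one_pow]
  -- divisibility helper
  have hiff : ∀ m n : ℕ, n < c → (c ∣ a*m + n ↔ n = (c - a*m % c) % c) := by
    intro m n hn
    have hr : a*m % c < c := Nat.mod_lt _ (by omega)
    have hmod : (a*m + n) % c = (a*m % c + n) % c := by
      conv_lhs => rw [Nat.add_mod]
      rw [Nat.mod_eq_of_lt hn]
    constructor
    · intro hd
      have h0 : (a*m % c + n) % c = 0 := by
        rw [← hmod]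
        exact Nat.mod_eq_zero_of_dvd hd
      by_cases hr0 : a*m % c = 0
      · rw [hr0, Nat.zero_add, Nat.mod_eq_of_lt hn] at h0
        rw [hr0, Nat.sub_zero, Nat.mod_self]
        exact h0
      · rw [Nat.mod_eq_of_lt (show c - a*m % c < c by omega)]
        by_cases hlt : a*m % c + n < c
        · rw [Nat.mod_eq_of_lt hlt] at h0
          omega
        · rw [Nat.mod_eq_sub_mod (by omega), Nat.mod_eq_of_lt (by omega)] at h0
          omega
    · intro hd
      subst hd
      apply Nat.dvd_of_mod_eq_zero
      by_cases hr0 : a*m % c = 0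
      · have h1 : (c - a*m % c) % c = 0 := by rw [hr0, Nat.sub_zero, Nat.mod_self]
        rw [h1, Nat.add_zero]
        exact hr0
      · have h1 : (c - a*m % c) % c = c - a*m % c := Nat.mod_eq_of_lt (by omega)
        rw [h1, Nat.add_mod, h1, show a*m % c + (c - a*m % c) = c by omega, Nat.mod_self]
  -- inner sum evaluation
  have hinner : ∀ m : ℕ, (∑ n ∈ range c, (m:ℂ)*(n:ℂ)* (if c ∣ a*m+n then (c:ℂ) else 0))
      = (m:ℂ) * (((c - a*m % c) % c : ℕ):ℂ) * c := by
    intro m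
    rw [Finset.sum_eq_single ((c - a*m % c) % c)]
    · rw [if_pos ((hiff m _ (Nat.mod_lt _ (by omega))).2 rfl)]
    · intro n hn hne
      rw [if_neg (fun hd => hne ((hiff m n (Finset.mem_range.1 hn)).1 hd)), mul_zero]
    · intro hmem
      exact absurd (Finset.mem_range.2 (Nat.mod_lt _ (by omega))) hmem
  -- per-k key identity
  have key : ∀ k ∈ Ico 1 c,
      1 / (((ζ^k)^a - 1) * (ζ^k - 1))
        = (∑ m ∈ range c, ∑ n ∈ range c, (m:ℂ)*(n:ℂ)*ζ^(k*(a*m+n))) / (c:ℂ)^2 := by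
    intro k hk
    obtain ⟨hk1, hk2⟩ := Finset.mem_Ico.1 hk
    have hndvd : ¬ c ∣ k := fun h => by
      have := Nat.le_of_dvd (by omega) h; omega
    have hμ1 : ζ^k ≠ 1 := fun h => hndvd ((hprim.pow_eq_one_iff_dvd k).1 h)
    have hndvd2 : ¬ c ∣ k*a := fun h =>
      hndvd (Nat.Coprime.dvd_of_dvd_mul_right (Nat.Coprime.symm hac) h)
    have hμa : (ζ^k)^a ≠ 1 := by
      rw [← pow_mul]
      exact fun h => hndvd2 ((hprim.pow_eq_one_iff_dvd _).1 h)
    have hA := aux1 c ((ζ^k)^a) (by rw [← pow_mul, mul_comm a c, pow_mul, hpowc k, one_pow]) hμa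
    have hB := aux1 c (ζ^k) (hpowc k) hμ1
    set Sa := ∑ m ∈ range c, (m:ℂ)*((ζ^k)^a)^m with hSa
    set Sb := ∑ m ∈ range c, (m:ℂ)*(ζ^k)^m with hSb
    have hprod : ((((ζ^k)^a - 1) * (ζ^k - 1))) * (Sa*Sb) = (c:ℂ)^2 := by
      calc ((((ζ^k)^a - 1) * (ζ^k - 1))) * (Sa*Sb)
          = (((ζ^k)^a - 1)*Sa) * ((ζ^k - 1)*Sb) := by ring
        _ = (c:ℂ)*(c:ℂ) := by rw [hA, hB]
        _ = (c:ℂ)^2 := by ring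
    have hX0 : (((ζ^k)^a - 1) * (ζ^k - 1)) ≠ 0 := by
      intro h
      rw [h, zero_mul] at hprod
      exact (pow_ne_zero 2 hc0) hprod.symm
    have hSab : Sa * Sb = ∑ m ∈ range c, ∑ n ∈ range c, (m:ℂ)*(n:ℂ)*ζ^(k*(a*m+n)) := by
      rw [hSa, hSb, Finset.sum_mul_sum]
      apply Finset.sum_congr rfl; intro m _
      apply Finset.sum_congr rfl; intro n _
      have e1 : ((ζ^k)^a)^m = ζ^(k*a*m) := by rw [← pow_mul, ← pow_mul, mul_assoc]
      have e2 : (ζ^k)^n = ζ^(k*n) := by rw [← pow_mul]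
      rw [e1, e2, show k*(a*m+n) = k*a*m + k*n by ring, pow_add]
      ring
    rw [← hSab, eq_div_iff (pow_ne_zero 2 hc0), div_mul_eq_mul_div, one_mul,
      div_eq_iff hX0]
    linear_combination -hprod
  -- sum over k of powers
  have hksum : ∀ j : ℕ, ∑ k ∈ Ico 1 c, ζ^(k*j) = (if c ∣ j then (c:ℂ) else 0) - 1 := by
    intro j
    have h := aux2 c ζ hprim j
    have h2 : (∑ k ∈ range c, ζ^(j*k)) = ζ^(j*0) + ∑ k ∈ Ico 1 c, ζ^(j*k) := by
      rw [Finset.range_eq_Ico]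
      exact Finset.sum_eq_sum_Ico_succ_bot (by omega) _
    rw [h2, Nat.mul_zero, pow_zero] at h
    have h3 : ∑ k ∈ Ico 1 c, ζ^(k*j) = ∑ k ∈ Ico 1 c, ζ^(j*k) := by
      apply Finset.sum_congr rfl; intro k _; rw [mul_comm]
    rw [h3]
    linear_combination h
  -- stripping lemma
  have hstrip : ∀ f : ℕ → ℂ, f 0 = 0 → ∑ m ∈ range c, f m = ∑ m ∈ Ico 1 c, f m := by
    intro f hf
    rw [Finset.range_eq_Ico, Finset.sum_eq_sum_Ico_succ_bot (by omega : 0 < c) f, hf, zero_add]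
  -- Gauss sum over Ico 1 c in ℂ
  have hGI : (∑ m ∈ Ico 1 c, (m:ℂ)) = (c:ℂ)*((c:ℂ)-1)/2 := by
    have hGn : (∑ k ∈ range c, k) * 2 = c * (c - 1) := Finset.sum_range_id_mul_two c
    have h1 : (∑ k ∈ range c, (k:ℂ)) = ∑ k ∈ Ico 1 c, (k:ℂ) := hstrip _ (by simp)
    rw [← h1]
    have h2 : ((∑ k ∈ range c, k : ℕ) : ℂ) * 2 = (c:ℂ) * ((c:ℂ) - 1) := by
      rw [show ((2:ℂ)) = ((2:ℕ):ℂ) by norm_num, ← Nat.cast_mul, hGn]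
      push_cast [Nat.cast_sub (by omega : 1 ≤ c)]
      ring
    push_cast at h2
    linear_combination h2 / 2
  have part1 : (∑ m ∈ range c, ∑ n ∈ range c, (m:ℂ)*(n:ℂ)*(if c ∣ a*m+n then (c:ℂ) else 0))
      = (c:ℂ) * ((c:ℂ)*((c:ℂ)*((c:ℂ)-1)/2) - ∑ k ∈ Ico 1 c, (k:ℂ)*((a*k % c : ℕ):ℂ)) := by
    rw [Finset.sum_congr rfl (fun m _ => hinner m)]
    rw [hstrip _ (by simp)]
    have hterm2 : ∀ m ∈ Ico 1 c, (m:ℂ) * (((c - a*m % c) % c : ℕ):ℂ) * (c:ℂ)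
        = ((m:ℂ)*(c:ℂ) - (m:ℂ)*((a*m % c : ℕ):ℂ))*(c:ℂ) := by
      intro m hm
      have h1 : a*m % c ≠ 0 := aux4 a c m hac hm
      have h2 : a*m % c < c := Nat.mod_lt _ (by omega)
      rw [Nat.mod_eq_of_lt (by omega : c - a*m % c < c), Nat.cast_sub (le_of_lt h2)]
      push_cast
      ring
    rw [Finset.sum_congr rfl hterm2, ← Finset.sum_mul, Finset.sum_sub_distrib,
      ← Finset.sum_mul, hGI]
    ring
  have part2 : (∑ m ∈ range c, ∑ n ∈ range c, (m:ℂ)*(n:ℂ)) = ((c:ℂ)*((c:ℂ)-1)/2)^2 := by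
    rw [← Finset.sum_mul_sum, hstrip _ (by simp), hGI]
    ring
  have hfrac : ∀ X Y : ℂ, ((c:ℂ)*X - Y)/(c:ℂ)^2 = X/(c:ℂ) - Y/(c:ℂ)^2 := by
    intro X Y
    field_simp
  calc ∑ k ∈ Finset.Ico 1 c,
        1 / (((Complex.exp (2 * Real.pi * Complex.I * k / c)) ^ (a : ℕ) - 1) *
              (Complex.exp (2 * Real.pi * Complex.I * k / c) - 1))
      = ∑ k ∈ Ico 1 c, 1 / (((ζ^k)^a - 1) * (ζ^k - 1)) := by
        apply Finset.sum_congr rfl; intro k _; rw [hexp k]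
    _ = ∑ k ∈ Ico 1 c,
          (∑ m ∈ range c, ∑ n ∈ range c, (m:ℂ)*(n:ℂ)*ζ^(k*(a*m+n))) / (c:ℂ)^2 :=
        Finset.sum_congr rfl key
    _ = (∑ k ∈ Ico 1 c,
          ∑ m ∈ range c, ∑ n ∈ range c, (m:ℂ)*(n:ℂ)*ζ^(k*(a*m+n))) / (c:ℂ)^2 := by
        rw [Finset.sum_div]
    _ = (∑ m ∈ range c, ∑ n ∈ range c,
          ∑ k ∈ Ico 1 c, (m:ℂ)*(n:ℂ)*ζ^(k*(a*m+n))) / (c:ℂ)^2 := by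
        rw [Finset.sum_comm]
        congr 1
        apply Finset.sum_congr rfl; intro m _
        rw [Finset.sum_comm]
    _ = (∑ m ∈ range c, ∑ n ∈ range c,
          (m:ℂ)*(n:ℂ)*((if c ∣ a*m+n then (c:ℂ) else 0) - 1)) / (c:ℂ)^2 := by
        congr 1
        apply Finset.sum_congr rfl; intro m _
        apply Finset.sum_congr rfl; intro n _
        rw [← Finset.mul_sum, hksum (a*m+n)]
    _ = ((∑ m ∈ range c, ∑ n ∈ range c, (m:ℂ)*(n:ℂ)*(if c ∣ a*m+n then (c:ℂ) else 0))
          - ∑ m ∈ range c, ∑ n ∈ range c, (m:ℂ)*(n:ℂ)) / (c:ℂ)^2 := by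
        congr 1
        rw [← Finset.sum_sub_distrib]
        apply Finset.sum_congr rfl; intro m _
        rw [← Finset.sum_sub_distrib]
        apply Finset.sum_congr rfl; intro n _
        ring
    _ = ((c:ℂ) * ((c:ℂ)*((c:ℂ)*((c:ℂ)-1)/2) - ∑ k ∈ Ico 1 c, (k:ℂ)*((a*k % c : ℕ):ℂ))
          - ((c:ℂ)*((c:ℂ)-1)/2)^2) / (c:ℂ)^2 := by
        rw [part1, part2]
    _ = ((c:ℂ) * ((c:ℂ) * ((c:ℂ)-1)/2) - ∑ k ∈ Ico 1 c, (k : ℂ) * ((a * k % c : ℕ) : ℂ)) / c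
          - ((c:ℂ) * ((c:ℂ)-1)/2)^2 / c^2 := by
        rw [hfrac]

theorem fourier_dedekind_eq_dedekind_sum (a c : ℕ) (ha : 0 < a) (hc : 0 < c)
    (hac : Nat.Coprime a c) :
    (1 / (c : ℂ)) * ∑ k ∈ Finset.Ico 1 c,
        1 / (((Complex.exp (2 * Real.pi * Complex.I * k / c)) ^ (a : ℤ) - 1) *
              (Complex.exp (2 * Real.pi * Complex.I * k / c) - 1)) =
      1 / 4 - 1 / (4 * c) - (dedekindSum a c : ℂ) := by
  rcases eq_or_lt_of_le (Nat.succ_le_of_lt hc) with h1 | hc1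
  · -- c = 1
    have : c = 1 := h1.symm
    subst this
    simp [dedekindSum]
  · have hb : ∃ b, a * b % c = 1 := by
      have := (Nat.exists_mul_mod_eq_one_of_coprime hac hc1).imp fun _ h => h.2
      exact this
    have h1 := step1 a c hc1 hac hb
    have h2 := step2 a c hc1 hac hb
    have hzpow : ∀ k : ℕ, (Complex.exp (2 * Real.pi * Complex.I * k / c)) ^ (a : ℤ)
        = (Complex.exp (2 * Real.pi * Complex.I * k / c)) ^ (a : ℕ) := fun k => zpow_natCast _ a
    simp only [hzpow]
    rw [h2]
    have hc0 : (c : ℂ) ≠ 0 := by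
      exact_mod_cast (by omega : (c:ℕ) ≠ 0)
    have hsc : ((dedekindSum a c : ℚ) : ℂ)
        = (∑ k ∈ Ico 1 c, (k : ℂ) * ((a * k % c : ℕ) : ℂ)) / c ^ 2 - ((c : ℂ) - 1) / 4 := by
      rw [h1]
      push_cast
      ring
    rw [hsc]
    exact final_algebra c hc1 _
end

section
/- For a positive integer c and integer t, the Fourier-Dedekind sum σ_t(c_1,...,c_n;c) is a rational number. -/
open Complex Finset

/-- The Fourier–Dedekind sum
`σ_t(c_1,…,c_n; c) = (1/c) ∑_{λ^c=1, λ≠1} λ^t / ∏_i (λ^{c_i} - 1)`. -/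
noncomputable def fourierDedekindSum (t : ℤ) {n : ℕ} (cs : Fin n → ℤ) (c : ℕ) : ℂ :=
  (1 / (c : ℂ)) * ∑ k ∈ Finset.Ico 1 c,
    (Complex.exp (2 * Real.pi * Complex.I * k / c)) ^ t /
      ∏ i, ((Complex.exp (2 * Real.pi * Complex.I * k / c)) ^ (cs i) - 1)

/-- The generic term of the Fourier–Dedekind sum, with `λ = ζ ^ x`. -/
noncomputable def fdTerm (t : ℤ) {n : ℕ} (cs : Fin n → ℤ) (c : ℕ) {K : Type*} [Field K]
    (ζ : K) (x : ZMod c) : K :=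
  ζ ^ (t * (x.val : ℤ)) / ∏ i, (ζ ^ (cs i * (x.val : ℤ)) - 1)

lemma fdTerm_map (t : ℤ) {n : ℕ} (cs : Fin n → ℤ) (c : ℕ) {K K' F : Type*} [Field K] [Field K']
    [FunLike F K K'] [RingHomClass F K K'] (φ : F) (ζ : K) (x : ZMod c) :
    φ (fdTerm t cs c ζ x) = fdTerm t cs c (φ ζ) x := by
  simp only [fdTerm, map_div₀, map_prod, map_sub, map_one, map_zpow₀]

lemma zpow_congr_of_primroot {K : Type*} [Field K] {c : ℕ} {ζ : K} (hζ : IsPrimitiveRoot ζ c)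
    (hc : 0 < c) {m m' : ℤ} (h : (m : ZMod c) = (m' : ZMod c)) : ζ ^ m = ζ ^ m' := by
  have h0 : ζ ≠ 0 := hζ.ne_zero hc.ne'
  have hd : (c : ℤ) ∣ m - m' := by
    have := (ZMod.intCast_eq_intCast_iff m m' c).mp h
    exact Int.ModEq.dvd this.symm
  have h1 : ζ ^ (m - m') = 1 := (hζ.zpow_eq_one_iff_dvd _).mpr hd
  calc ζ ^ m = ζ ^ (m - m' + m') := by ring_nf
    _ = ζ ^ (m - m') * ζ ^ m' := zpow_add₀ h0 _ _
    _ = ζ ^ m' := by rw [h1, one_mul]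

lemma fdTerm_shift (t : ℤ) {n : ℕ} (cs : Fin n → ℤ) {c : ℕ} [NeZero c] {K : Type*} [Field K]
    {ζ : K} (hζ : IsPrimitiveRoot ζ c) (a : ℕ) (x : ZMod c) :
    fdTerm t cs c (ζ ^ a) x = fdTerm t cs c ζ ((a : ZMod c) * x) := by
  have hc : 0 < c := Nat.pos_of_ne_zero (NeZero.ne c)
  have key : ∀ e : ℤ, (ζ ^ a) ^ (e * (x.val : ℤ))
      = ζ ^ (e * ((((a : ZMod c) * x).val : ℕ) : ℤ)) := by
    intro e
    rw [← zpow_natCast ζ a, ← zpow_mul]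
    refine zpow_congr_of_primroot hζ hc ?_
    push_cast
    rw [ZMod.natCast_val, ZMod.cast_id]
    push_cast [ZMod.natCast_val, ZMod.cast_id]
    ring
  unfold fdTerm
  rw [key t]
  congr 1
  refine Finset.prod_congr rfl fun i _ => ?_
  rw [key (cs i)]

lemma sum_fdTerm_unit_mul {c : ℕ} [NeZero c] {K : Type*} [Field K] (F : ZMod c → K)
    (u : (ZMod c)ˣ) :
    ∑ x ∈ Finset.univ.erase (0 : ZMod c), F ((u : ZMod c) * x)
      = ∑ x ∈ Finset.univ.erase (0 : ZMod c), F x := by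
  refine Finset.sum_nbij' (fun x => (u : ZMod c) * x) (fun y => ((u⁻¹ : (ZMod c)ˣ) : ZMod c) * y)
    ?_ ?_ ?_ ?_ ?_
  · intro x hx
    simp only [Finset.mem_erase, Finset.mem_univ, and_true] at hx ⊢
    exact fun h => hx (by simpa using (Units.mul_right_eq_zero u).mp h)
  · intro y hy
    simp only [Finset.mem_erase, Finset.mem_univ, and_true] at hy ⊢
    exact fun h => hy (by simpa using (Units.mul_right_eq_zero u⁻¹).mp h)
  · intro x _
    show ((u⁻¹ : (ZMod c)ˣ) : ZMod c) * ((u : ZMod c) * x) = x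
    rw [← mul_assoc, ← Units.val_mul, inv_mul_cancel, Units.val_one, one_mul]
  · intro y _
    show (u : ZMod c) * (((u⁻¹ : (ZMod c)ˣ) : ZMod c) * y) = y
    rw [← mul_assoc, ← Units.val_mul, mul_inv_cancel, Units.val_one, one_mul]
  · intro x _
    rfl

lemma sum_Ico_eq_sum_zmod {c : ℕ} [NeZero c] {K : Type*} [Field K] (G : ZMod c → K) :
    ∑ k ∈ Finset.Ico 1 c, G ((k : ZMod c))
      = ∑ x ∈ Finset.univ.erase (0 : ZMod c), G x := by
  refine Finset.sum_nbij' (fun k => (k : ZMod c)) (fun x => x.val) ?_ ?_ ?_ ?_ ?_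
  · intro k hk
    simp only [Finset.mem_Ico] at hk
    simp only [Finset.mem_erase, Finset.mem_univ, and_true]
    intro h
    rw [ZMod.natCast_eq_zero_iff] at h
    exact absurd (Nat.le_of_dvd (by omega) h) (by omega)
  · intro x hx
    simp only [Finset.mem_erase, Finset.mem_univ, and_true] at hx
    simp only [Finset.mem_Ico]
    refine ⟨?_, ZMod.val_lt x⟩
    have : x.val ≠ 0 := fun h => hx ((ZMod.val_eq_zero x).mp h)
    omega
  · intro k hk
    simp only [Finset.mem_Ico] at hk
    show ((k : ZMod c)).val = k
    rw [ZMod.val_natCast, Nat.mod_eq_of_lt hk.2]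
  · intro x _
    exact ZMod.natCast_rightInverse x
  · intro k _
    rfl


lemma fdSum_rat {K : Type*} [Field K] [Algebra ℚ K] [FiniteDimensional ℚ K] [IsGalois ℚ K]
    {c : ℕ} [NeZero c] {ζK : K} (hζK : IsPrimitiveRoot ζK c) (t : ℤ) {n : ℕ} (cs : Fin n → ℤ) :
    ∃ q : ℚ, ∑ x ∈ Finset.univ.erase (0 : ZMod c), fdTerm t cs c ζK x = algebraMap ℚ K q := by
  have hc : 0 < c := Nat.pos_of_ne_zero (NeZero.ne c)
  set S : K := ∑ x ∈ Finset.univ.erase (0 : ZMod c), fdTerm t cs c ζK x with hS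
  have hfixed : ∀ σ : K ≃ₐ[ℚ] K, σ S = S := by
    intro σ
    have hprim : IsPrimitiveRoot (σ ζK) c :=
      hζK.map_of_injective σ.injective
    obtain ⟨a, _, ha⟩ := hζK.eq_pow_of_pow_eq_one hprim.pow_eq_one
    have hacop : a.Coprime c := by
      rw [← hζK.pow_iff_coprime hc a, ha]
      exact hprim
    rw [hS, map_sum]
    have hterm : ∀ x : ZMod c, σ (fdTerm t cs c ζK x)
        = fdTerm t cs c ζK ((a : ZMod c) * x) := by
      intro x
      rw [fdTerm_map, ← ha, fdTerm_shift t cs hζK]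
    calc ∑ x ∈ Finset.univ.erase (0 : ZMod c), σ (fdTerm t cs c ζK x)
        = ∑ x ∈ Finset.univ.erase (0 : ZMod c),
            fdTerm t cs c ζK (((ZMod.unitOfCoprime a hacop : (ZMod c)ˣ) : ZMod c) * x) := by
          refine Finset.sum_congr rfl fun x _ => ?_
          rw [hterm x, ZMod.coe_unitOfCoprime]
      _ = S := sum_fdTerm_unit_mul _ _
  have hbot : IntermediateField.fixedField (⊤ : Subgroup (K ≃ₐ[ℚ] K)) = ⊥ :=
    (List.TFAE.out (IsGalois.tfae (F := ℚ) (E := K)) 0 1 rfl rfl).mp inferInstance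
  have hmem : S ∈ IntermediateField.fixedField (⊤ : Subgroup (K ≃ₐ[ℚ] K)) := by
    intro g
    exact hfixed g
  rw [hbot, IntermediateField.mem_bot] at hmem
  obtain ⟨q0, hq0⟩ := hmem
  exact ⟨q0, hq0.symm⟩

theorem fourierDedekindSum_rational (t : ℤ) {n : ℕ} (cs : Fin n → ℤ) (c : ℕ) (hc : 0 < c)
    (hcop : ∀ i, IsCoprime (cs i) (c : ℤ)) :
    ∃ q : ℚ, fourierDedekindSum t cs c = (q : ℂ) := by
  haveI : NeZero c := ⟨hc.ne'⟩
  set cp : ℕ+ := ⟨c, hc⟩ with hcp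
  haveI : NeZero (cp : ℕ) := ⟨cp.ne_zero⟩
  haveI : IsCyclotomicExtension {(cp : ℕ)} ℚ (CyclotomicField cp ℚ) :=
    CyclotomicField.isCyclotomicExtension _ _
  haveI : FiniteDimensional ℚ (CyclotomicField cp ℚ) :=
    IsCyclotomicExtension.finiteDimensional {(cp : ℕ)} ℚ (CyclotomicField cp ℚ)
  haveI : IsGalois ℚ (CyclotomicField cp ℚ) :=
    IsCyclotomicExtension.isGalois {(cp : ℕ)} ℚ (CyclotomicField cp ℚ)
  set ζK : CyclotomicField cp ℚ := IsCyclotomicExtension.zeta cp ℚ _ with hζKdef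
  have hζK' : IsPrimitiveRoot ζK ((cp : ℕ+) : ℕ) := IsCyclotomicExtension.zeta_spec (cp : ℕ) ℚ (CyclotomicField cp ℚ)
  have hζK : IsPrimitiveRoot ζK c := hζK'
  obtain ⟨q0, hq0⟩ := fdSum_rat hζK t cs
  -- embed K into ℂ sending ζK to exp(2πi/c)
  set ζ : ℂ := Complex.exp (2 * Real.pi * Complex.I / c) with hζdef
  have hζ : IsPrimitiveRoot ζ c := Complex.isPrimitiveRoot_exp c hc.ne'
  have hirr : Irreducible (Polynomial.cyclotomic cp ℚ) := Polynomial.cyclotomic.irreducible_rat hc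
  have hζmem : ζ ∈ primitiveRoots (cp : ℕ) ℂ := (mem_primitiveRoots hc).mpr hζ
  set φ : CyclotomicField cp ℚ →ₐ[ℚ] ℂ :=
    (hζK'.embeddingsEquivPrimitiveRoots ℂ hirr).symm ⟨ζ, hζmem⟩ with hφ
  have hφζ : φ ζK = ζ := by
    have := hζK'.embeddingsEquivPrimitiveRoots_apply_coe ℂ hirr φ
    rw [hφ] at this ⊢
    rw [← this, Equiv.apply_symm_apply]
  -- compute the Fourier–Dedekind sum
  have hterm : ∀ k ∈ Finset.Ico 1 c,
      (Complex.exp (2 * Real.pi * Complex.I * k / c)) ^ t /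
        ∏ i, ((Complex.exp (2 * Real.pi * Complex.I * k / c)) ^ (cs i) - 1)
      = fdTerm t cs c ζ ((k : ZMod c)) := by
    intro k hk
    simp only [Finset.mem_Ico] at hk
    have hval : ((k : ZMod c)).val = k := by
      rw [ZMod.val_natCast, Nat.mod_eq_of_lt hk.2]
    have hexp : Complex.exp (2 * Real.pi * Complex.I * k / c) = ζ ^ k := by
      rw [hζdef, ← Complex.exp_nat_mul]
      congr 1
      ring
    have hzp : ∀ e : ℤ, (ζ ^ k) ^ e = ζ ^ (e * (k : ℤ)) := by
      intro e
      rw [← zpow_natCast ζ k, ← zpow_mul, mul_comm]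
    rw [hexp]
    unfold fdTerm
    rw [hval]
    rw [hzp t]
    congr 1
    refine Finset.prod_congr rfl fun i _ => ?_
    rw [hzp (cs i)]
  refine ⟨q0 / c, ?_⟩
  rw [fourierDedekindSum]
  rw [Finset.sum_congr rfl hterm]
  have hsum : ∑ k ∈ Finset.Ico 1 c, fdTerm t cs c ζ ((k : ZMod c))
      = φ (∑ x ∈ Finset.univ.erase (0 : ZMod c), fdTerm t cs c ζK x) := by
    rw [sum_Ico_eq_sum_zmod, map_sum]
    refine Finset.sum_congr rfl fun x _ => ?_
    rw [fdTerm_map, hφζ]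
  rw [hsum, hq0]
  have : φ (algebraMap ℚ (CyclotomicField cp ℚ) q0) = (q0 : ℂ) := by
    rw [AlgHom.commutes]
    norm_cast
  rw [this]
  push_cast
  have hcne : (c : ℂ) ≠ 0 := Nat.cast_ne_zero.mpr hc.ne'
  field_simp
end

section
/- Let a, b, c be pairwise coprime positive integers. Then σ_t(a,b;c) ≥ -c/12 - 1/(12c) for every integer t. -/
open Complex Finset ComplexOrder

private lemma aux_wgeom (x : ℂ) (n : ℕ) :
    (x - 1) * ∑ j ∈ Finset.range n, (j : ℂ) * x ^ j
      = ((n : ℂ) - 1) * x ^ n - ∑ j ∈ Finset.range n, x ^ j + 1 := by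
  induction n with
  | zero => simp
  | succ n ih =>
    rw [Finset.sum_range_succ, Finset.sum_range_succ (f := fun j => x ^ j), mul_add, ih]
    push_cast
    ring

private lemma aux_S (c : ℕ) (μ : ℂ) (h1 : μ ^ c = 1) (h2 : μ ≠ 1) :
    (μ - 1) * ∑ j ∈ Finset.range c, (j : ℂ) * μ ^ j = c := by
  have hg : ∑ j ∈ Finset.range c, μ ^ j = 0 := by
    have h := geom_sum_mul μ c
    rw [h1, sub_self] at h
    rcases mul_eq_zero.mp h with h' | h'
    · exact h'
    · exact absurd (sub_eq_zero.mp h') h2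
  rw [aux_wgeom, h1, hg]
  ring

private lemma aux_geom_root (c : ℕ) (w : ℂ) (hw : w ^ c = 1) :
    ∑ k ∈ Finset.range c, w ^ k = if w = 1 then (c : ℂ) else 0 := by
  split_ifs with h
  · simp [h]
  · have h2 := geom_sum_mul w c
    rw [hw, sub_self] at h2
    rcases mul_eq_zero.mp h2 with h' | h'
    · exact h'
    · exact absurd (sub_eq_zero.mp h') h

private lemma aux_sum_id (n : ℕ) :
    ∑ i ∈ Finset.range n, (i : ℂ) = n * (n - 1) / 2 := by
  induction n with
  | zero => simp
  | succ n ih => rw [Finset.sum_range_succ, ih]; push_cast; ring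

private lemma aux_sum_sq (n : ℕ) :
    ∑ i ∈ Finset.range n, (i : ℂ) ^ 2 = n * (n - 1) * (2 * n - 1) / 6 := by
  induction n with
  | zero => simp
  | succ n ih => rw [Finset.sum_range_succ, ih]; push_cast; ring

private lemma aux_abs_one (c : ℕ) (hc : 0 < c) (μ : ℂ) (h : μ ^ c = 1) :
    ‖μ‖ = 1 := by
  have h1 : ‖μ‖ ^ c = 1 := by rw [← norm_pow, h, norm_one]
  have h2 := norm_nonneg μ
  rcases (pow_eq_one_iff_cases).mp h1 with h' | h' | h'
  · omega
  · exact h'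
  · linarith [h'.1]

private lemma key_sum (c : ℕ) (hc : 0 < c) (ζ : ℂ) (hζ : IsPrimitiveRoot ζ c)
    (d : ℕ) (hd : Nat.Coprime d c) :
    ∑ k ∈ Finset.Ico 1 c, (Complex.normSq (ζ ^ (d * k) - 1))⁻¹
      = ((c : ℝ) ^ 2 - 1) / 12 := by
  have hζc : ζ ^ c = 1 := hζ.pow_eq_one
  have hζ0 : ζ ≠ 0 := by
    intro h; rw [h, zero_pow hc.ne'] at hζc; exact zero_ne_one hζc
  have hc0 : (c : ℂ) ≠ 0 := Nat.cast_ne_zero.mpr hc.ne'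
  have hne : ∀ k ∈ Finset.Ico 1 c, ζ ^ (d * k) ≠ 1 := by
    intro k hk h1
    rw [Finset.mem_Ico] at hk
    have hdvd : c ∣ d * k := (hζ.pow_eq_one_iff_dvd _).mp h1
    have h2 : c ∣ k := (Nat.Coprime.dvd_of_dvd_mul_left (hd.symm) hdvd)
    exact absurd (Nat.le_of_dvd (by omega) h2) (by omega)
  set S : ℂ → ℂ := fun μ => ∑ j ∈ Finset.range c, (j : ℂ) * μ ^ j with hS
  -- expand product as double sum
  have hP : ∀ k : ℕ, S (ζ ^ (d * k)) * S ((ζ ^ (d * k))⁻¹)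
      = ∑ i ∈ Finset.range c, ∑ j ∈ Finset.range c,
          ((i : ℂ) * j) * (ζ ^ ((d : ℤ) * ((i : ℤ) - (j : ℤ)))) ^ k := by
    intro k
    rw [hS, Finset.sum_mul_sum]
    refine Finset.sum_congr rfl fun i _ => Finset.sum_congr rfl fun j _ => ?_
    have h1 : (ζ ^ (d * k)) ^ i * ((ζ ^ (d * k))⁻¹) ^ j
        = ζ ^ (((d * k * i : ℕ) : ℤ) - ((d * k * j : ℕ) : ℤ)) := by
      rw [inv_pow, ← pow_mul, ← pow_mul, zpow_sub₀ hζ0, zpow_natCast, zpow_natCast,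
        div_eq_mul_inv]
    have h2 : (ζ ^ ((d : ℤ) * ((i : ℤ) - (j : ℤ)))) ^ k
        = ζ ^ ((d : ℤ) * ((i : ℤ) - (j : ℤ)) * k) := by
      rw [← zpow_natCast (ζ ^ ((d : ℤ) * ((i : ℤ) - (j : ℤ)))) k, ← zpow_mul]
    calc ((i : ℂ) * (ζ ^ (d * k)) ^ i) * ((j : ℂ) * ((ζ ^ (d * k))⁻¹) ^ j)
        = ((i : ℂ) * j) * ((ζ ^ (d * k)) ^ i * ((ζ ^ (d * k))⁻¹) ^ j) := by ring
      _ = ((i : ℂ) * j) * (ζ ^ ((d : ℤ) * ((i : ℤ) - (j : ℤ)))) ^ k := by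
          rw [h1, h2]
          congr 1
          push_cast
          ring
  -- sum over all k in range c
  have hswap : ∑ k ∈ Finset.range c, S (ζ ^ (d * k)) * S ((ζ ^ (d * k))⁻¹)
      = c * ∑ i ∈ Finset.range c, (i : ℂ) ^ 2 := by
    calc ∑ k ∈ Finset.range c, S (ζ ^ (d * k)) * S ((ζ ^ (d * k))⁻¹)
        = ∑ k ∈ Finset.range c, ∑ i ∈ Finset.range c, ∑ j ∈ Finset.range c,
            ((i : ℂ) * j) * (ζ ^ ((d : ℤ) * ((i : ℤ) - (j : ℤ)))) ^ k :=
          Finset.sum_congr rfl fun k _ => hP k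
      _ = ∑ i ∈ Finset.range c, ∑ j ∈ Finset.range c, ((i : ℂ) * j) *
            ∑ k ∈ Finset.range c, (ζ ^ ((d : ℤ) * ((i : ℤ) - (j : ℤ)))) ^ k := by
          rw [Finset.sum_comm]
          refine Finset.sum_congr rfl fun i _ => ?_
          rw [Finset.sum_comm]
          exact Finset.sum_congr rfl fun j _ => (Finset.mul_sum _ _ _).symm
      _ = ∑ i ∈ Finset.range c, ∑ j ∈ Finset.range c,
            (if i = j then ((i : ℂ) * j) * c else 0) := by
          refine Finset.sum_congr rfl fun i hi => Finset.sum_congr rfl fun j hj => ?_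
          have hw : (ζ ^ ((d : ℤ) * ((i : ℤ) - (j : ℤ)))) ^ c = 1 := by
            rw [← zpow_natCast (ζ ^ ((d : ℤ) * ((i : ℤ) - (j : ℤ)))) c, ← zpow_mul,
              mul_comm ((d : ℤ) * ((i : ℤ) - (j : ℤ))) (c : ℤ), zpow_mul, zpow_natCast,
              hζc, one_zpow]
          rw [aux_geom_root c _ hw]
          have hiff : (ζ ^ ((d : ℤ) * ((i : ℤ) - (j : ℤ))) = 1) ↔ i = j := by
            rw [hζ.zpow_eq_one_iff_dvd]
            constructor
            · intro hdvd
              have hco : IsCoprime (c : ℤ) (d : ℤ) := Nat.isCoprime_iff_coprime.mpr hd.symm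
              have h3 : (c : ℤ) ∣ ((i : ℤ) - (j : ℤ)) := by
                rcases hco.dvd_of_dvd_mul_left hdvd with h3
                exact h3
              have h4 : (i : ℤ) - (j : ℤ) = 0 := by
                refine Int.eq_zero_of_abs_lt_dvd h3 ?_
                rw [Finset.mem_range] at hi hj
                rw [abs_lt]
                omega
              omega
            · intro h; subst h; simp
          by_cases hij : i = j
          · rw [if_pos (hiff.mpr hij), if_pos hij]
          · rw [if_neg (fun h => hij (hiff.mp h)), if_neg hij, mul_zero]
      _ = ∑ i ∈ Finset.range c, (i : ℂ) ^ 2 * c := by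
          refine Finset.sum_congr rfl fun i hi => ?_
          rw [Finset.sum_ite_eq (Finset.range c) i (fun j => ((i : ℂ) * j) * c), if_pos hi]
          ring
      _ = c * ∑ i ∈ Finset.range c, (i : ℂ) ^ 2 := by
          rw [← Finset.sum_mul, mul_comm]
  -- split off k = 0
  have hsplit : ∑ k ∈ Finset.range c, S (ζ ^ (d * k)) * S ((ζ ^ (d * k))⁻¹)
      = S 1 * S 1 + ∑ k ∈ Finset.Ico 1 c, S (ζ ^ (d * k)) * S ((ζ ^ (d * k))⁻¹) := by
    rw [Finset.range_eq_Ico, Finset.sum_eq_sum_Ico_succ_bot hc]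
    simp
  have hS1 : S 1 = (c : ℂ) * ((c : ℂ) - 1) / 2 := by
    rw [hS]
    simp only [one_pow, mul_one]
    exact aux_sum_id c
  -- term identity
  have hterm : ∀ k ∈ Finset.Ico 1 c, S (ζ ^ (d * k)) * S ((ζ ^ (d * k))⁻¹)
      = (c : ℂ) ^ 2 * ((Complex.normSq (ζ ^ (d * k) - 1) : ℝ) : ℂ)⁻¹ := by
    intro k hk
    set μ := ζ ^ (d * k) with hμ
    have hμc : μ ^ c = 1 := by
      rw [hμ, ← pow_mul, mul_comm (d * k) c, pow_mul, hζc, one_pow]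
    have hμ1 : μ ≠ 1 := hne k hk
    have hμ0 : μ ≠ 0 := pow_ne_zero _ hζ0
    have hinvc : (μ⁻¹) ^ c = 1 := by rw [inv_pow, hμc, inv_one]
    have hinv1 : μ⁻¹ ≠ 1 := by
      intro h; apply hμ1; rw [← inv_inv μ, h, inv_one]
    have h1 := aux_S c μ hμc hμ1
    have h2 := aux_S c μ⁻¹ hinvc hinv1
    have habs : ‖μ‖ = 1 := aux_abs_one c hc μ hμc
    have hnorm : Complex.normSq μ = 1 := by
      rw [← Complex.sq_norm, habs, one_pow]
    have hconj : (starRingEnd ℂ) μ = μ⁻¹ := by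
      have h3 : μ * (starRingEnd ℂ) μ = 1 := by
        rw [Complex.mul_conj, hnorm, Complex.ofReal_one]
      exact eq_inv_of_mul_eq_one_left (by rw [mul_comm] at h3; exact h3)
    have hns : ((Complex.normSq (μ - 1) : ℝ) : ℂ) = (μ - 1) * (μ⁻¹ - 1) := by
      rw [← Complex.mul_conj, map_sub, hconj, map_one]
    have hns0 : ((Complex.normSq (μ - 1) : ℝ) : ℂ) ≠ 0 := by
      rw [Complex.ofReal_ne_zero]
      exact Complex.normSq_pos.mpr (sub_ne_zero.mpr hμ1) |>.ne'
    have key : ((Complex.normSq (μ - 1) : ℝ) : ℂ) * (S μ * S μ⁻¹) = (c : ℂ) ^ 2 := by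
      rw [hns]
      calc (μ - 1) * (μ⁻¹ - 1) * (S μ * S μ⁻¹)
          = ((μ - 1) * S μ) * ((μ⁻¹ - 1) * S μ⁻¹) := by ring
        _ = (c : ℂ) * (c : ℂ) := by rw [h1, h2]
        _ = (c : ℂ) ^ 2 := by ring
    rw [eq_mul_inv_iff_mul_eq₀ hns0, mul_comm]
    exact key
  -- combine
  have hmain : (c : ℂ) ^ 2 * ∑ k ∈ Finset.Ico 1 c,
      ((Complex.normSq (ζ ^ (d * k) - 1) : ℝ) : ℂ)⁻¹
      = (c : ℂ) * ((c : ℂ) * ((c : ℂ) - 1) * (2 * (c : ℂ) - 1) / 6)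
        - ((c : ℂ) * ((c : ℂ) - 1) / 2) ^ 2 := by
    rw [Finset.mul_sum]
    calc ∑ k ∈ Finset.Ico 1 c, (c : ℂ) ^ 2 * ((Complex.normSq (ζ ^ (d * k) - 1) : ℝ) : ℂ)⁻¹
        = ∑ k ∈ Finset.Ico 1 c, S (ζ ^ (d * k)) * S ((ζ ^ (d * k))⁻¹) :=
          Finset.sum_congr rfl fun k hk => (hterm k hk).symm
      _ = (∑ k ∈ Finset.range c, S (ζ ^ (d * k)) * S ((ζ ^ (d * k))⁻¹)) - S 1 * S 1 := by
          rw [hsplit]; ring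
      _ = (c : ℂ) * ((c : ℂ) * ((c : ℂ) - 1) * (2 * (c : ℂ) - 1) / 6)
            - ((c : ℂ) * ((c : ℂ) - 1) / 2) ^ 2 := by
          rw [hswap, hS1, aux_sum_sq]; ring
  have hfin : ∑ k ∈ Finset.Ico 1 c, ((Complex.normSq (ζ ^ (d * k) - 1) : ℝ) : ℂ)⁻¹
      = ((c : ℂ) ^ 2 - 1) / 12 := by
    have h12 : (c : ℂ) ^ 2 * ∑ k ∈ Finset.Ico 1 c,
        ((Complex.normSq (ζ ^ (d * k) - 1) : ℝ) : ℂ)⁻¹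
        = (c : ℂ) ^ 2 * (((c : ℂ) ^ 2 - 1) / 12) := by
      rw [hmain]; ring
    exact mul_left_cancel₀ (pow_ne_zero 2 hc0) h12
  apply Complex.ofReal_injective
  push_cast
  exact hfin

private lemma aux_term_bound (x α β : ℂ) (hx : ‖x‖ = 1) (hα : α ≠ 0) (hβ : β ≠ 0) :
    -(1/2) * ((Complex.normSq α)⁻¹ + (Complex.normSq β)⁻¹) ≤ (x / (α * β)).re := by
  have hA : 0 < ‖α‖ := norm_pos_iff.mpr hα
  have hB : 0 < ‖β‖ := norm_pos_iff.mpr hβ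
  have h1 : ‖x / (α * β)‖ = 1 / (‖α‖ * ‖β‖) := by
    rw [norm_div, norm_mul, hx]
  have h2 : -‖x / (α * β)‖ ≤ (x / (α * β)).re := by
    have := Complex.abs_re_le_norm (x / (α * β))
    have := neg_abs_le (x / (α * β)).re
    linarith
  refine le_trans ?_ h2
  rw [h1, ← Complex.sq_norm, ← Complex.sq_norm]
  have key : 1 / (‖α‖ * ‖β‖)
      ≤ (1/2) * ((‖α‖ ^ 2)⁻¹ + (‖β‖ ^ 2)⁻¹) := by
    rw [div_le_iff₀ (by positivity)]
    have e1 : (‖α‖ ^ 2)⁻¹ = (‖α‖)⁻¹ ^ 2 := by rw [inv_pow]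
    have e2 : (‖β‖ ^ 2)⁻¹ = (‖β‖)⁻¹ ^ 2 := by rw [inv_pow]
    rw [e1, e2]
    have hA' : ‖α‖ * (‖α‖)⁻¹ = 1 := mul_inv_cancel₀ hA.ne'
    have hB' : ‖β‖ * (‖β‖)⁻¹ = 1 := mul_inv_cancel₀ hB.ne'
    nlinarith [sq_nonneg ((‖α‖)⁻¹ - (‖β‖)⁻¹), mul_pos hA hB,
      sq_nonneg ((‖α‖)⁻¹ + (‖β‖)⁻¹)]
  linarith

theorem fourier_dedekind_lower_bound (a b c : ℕ) (ha : 0 < a) (hb : 0 < b) (hc : 0 < c)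
    (hab : Nat.Coprime a b) (hac : Nat.Coprime a c) (hbc : Nat.Coprime b c) (t : ℤ) :
    (-(c : ℂ) / 12 - 1 / (12 * c)) ≤
      (1 / (c : ℂ)) * ∑ k ∈ Finset.Ico 1 c,
        (Complex.exp (2 * Real.pi * Complex.I * k / c)) ^ t /
          (((Complex.exp (2 * Real.pi * Complex.I * k / c)) ^ (a : ℤ) - 1) *
            ((Complex.exp (2 * Real.pi * Complex.I * k / c)) ^ (b : ℤ) - 1)) := by
  have hcR : (0 : ℝ) < (c : ℝ) := Nat.cast_pos.mpr hc
  set ζ : ℂ := Complex.exp (2 * Real.pi * Complex.I / c) with hζdef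
  have hprim : IsPrimitiveRoot ζ c := Complex.isPrimitiveRoot_exp c hc.ne'
  have hζc : ζ ^ c = 1 := hprim.pow_eq_one
  have hζ0 : ζ ≠ 0 := Complex.exp_ne_zero _
  have hexp : ∀ k : ℕ, Complex.exp (2 * Real.pi * Complex.I * k / c) = ζ ^ k := by
    intro k
    rw [hζdef, ← Complex.exp_nat_mul]
    congr 1
    ring
  have hzp : ∀ (k m : ℕ), (ζ ^ k) ^ ((m : ℕ) : ℤ) = ζ ^ (m * k) := by
    intro k m
    rw [zpow_natCast, ← pow_mul, mul_comm]
  simp only [hexp, hzp]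
  -- notation
  set W : ℂ := ∑ k ∈ Finset.Ico 1 c,
      (ζ ^ k) ^ t / ((ζ ^ (a * k) - 1) * (ζ ^ (b * k) - 1)) with hW
  -- nonvanishing of denominators
  have hne : ∀ (d : ℕ), Nat.Coprime d c → ∀ k ∈ Finset.Ico 1 c, ζ ^ (d * k) ≠ 1 := by
    intro d hd k hk h1
    rw [Finset.mem_Ico] at hk
    have hdvd : c ∣ d * k := (hprim.pow_eq_one_iff_dvd _).mp h1
    have h2 : c ∣ k := Nat.Coprime.dvd_of_dvd_mul_left hd.symm hdvd
    exact absurd (Nat.le_of_dvd (by omega) h2) (by omega)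
  -- conj of powers of ζ
  have habsζ : ∀ m : ℕ, ‖ζ ^ m‖ = 1 := by
    intro m
    have : (ζ ^ m) ^ c = 1 := by
      rw [← pow_mul, mul_comm m c, pow_mul, hζc, one_pow]
    exact aux_abs_one c hc _ this
  have hconjpow : ∀ m : ℕ, (starRingEnd ℂ) (ζ ^ m) = (ζ ^ m)⁻¹ := by
    intro m
    have hnorm : Complex.normSq (ζ ^ m) = 1 := by
      rw [← Complex.sq_norm, habsζ, one_pow]
    have h3 : ζ ^ m * (starRingEnd ℂ) (ζ ^ m) = 1 := by
      rw [Complex.mul_conj, hnorm, Complex.ofReal_one]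
    exact eq_inv_of_mul_eq_one_left (by rw [mul_comm] at h3; exact h3)
  have hinvpow : ∀ (d k : ℕ), k ≤ c → (ζ ^ (d * k))⁻¹ = ζ ^ (d * (c - k)) := by
    intro d k hk
    have h1 : ζ ^ (d * (c - k)) * ζ ^ (d * k) = 1 := by
      rw [← pow_add, ← Nat.mul_add, Nat.sub_add_cancel hk, mul_comm d c, pow_mul, hζc, one_pow]
    exact (eq_inv_of_mul_eq_one_left h1).symm
  -- the sum is self-conjugate
  have hWconj : (starRingEnd ℂ) W = W := by
    rw [hW, map_sum]
    refine Finset.sum_nbij' (fun k => c - k) (fun k => c - k) ?_ ?_ ?_ ?_ ?_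
    · intro k hk; simp only [Finset.mem_Ico] at hk ⊢; omega
    · intro k hk; simp only [Finset.mem_Ico] at hk ⊢; omega
    · intro k hk; simp only [Finset.mem_Ico] at hk; omega
    · intro k hk; simp only [Finset.mem_Ico] at hk; omega
    · intro k hk
      rw [Finset.mem_Ico] at hk
      have hkc : k ≤ c := by omega
      rw [map_div₀, map_mul, map_sub, map_sub, map_one, map_zpow₀, hconjpow, hconjpow, hconjpow,
        hinvpow a k hkc, hinvpow b k hkc]
      have h1k : (ζ ^ k)⁻¹ = ζ ^ (c - k) := by
        have := hinvpow 1 k hkc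
        simpa using this
      rw [h1k]
  have hWim : W.im = 0 := Complex.conj_eq_iff_im.mp hWconj
  -- real-part lower bound
  have hTa := key_sum c hc ζ hprim a hac
  have hTb := key_sum c hc ζ hprim b hbc
  have hbound : ∀ k ∈ Finset.Ico 1 c,
      -(1/2) * ((Complex.normSq (ζ ^ (a * k) - 1))⁻¹ + (Complex.normSq (ζ ^ (b * k) - 1))⁻¹)
        ≤ ((ζ ^ k) ^ t / ((ζ ^ (a * k) - 1) * (ζ ^ (b * k) - 1))).re := by
    intro k hk
    have hxa : ζ ^ (a * k) - 1 ≠ 0 := sub_ne_zero.mpr (hne a hac k hk)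
    have hxb : ζ ^ (b * k) - 1 ≠ 0 := sub_ne_zero.mpr (hne b hbc k hk)
    have hxt : ‖(ζ ^ k) ^ t‖ = 1 := by
      rw [norm_zpow, habsζ, one_zpow]
    exact aux_term_bound _ _ _ hxt hxa hxb
  have hWre : -(((c : ℝ) ^ 2 - 1) / 12) ≤ W.re := by
    rw [hW, Complex.re_sum]
    calc -(((c : ℝ) ^ 2 - 1) / 12)
        = ∑ k ∈ Finset.Ico 1 c, -(1/2) *
            ((Complex.normSq (ζ ^ (a * k) - 1))⁻¹ + (Complex.normSq (ζ ^ (b * k) - 1))⁻¹) := by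
          rw [← Finset.mul_sum, Finset.sum_add_distrib, hTa, hTb]
          ring
      _ ≤ _ := Finset.sum_le_sum hbound
  -- conclude
  rw [Complex.le_def]
  have hL : (-(c : ℂ) / 12 - 1 / (12 * (c : ℂ)))
      = (((-(c : ℝ) / 12 - 1 / (12 * (c : ℝ))) : ℝ) : ℂ) := by
    push_cast
    ring
  have h1c : (1 / (c : ℂ)) = (((1 / (c : ℝ)) : ℝ) : ℂ) := by
    push_cast
    ring
  rw [hL, h1c]
  constructor
  · rw [Complex.ofReal_re, Complex.re_ofReal_mul]
    have h2 : (1 / (c : ℝ)) * (-(((c : ℝ) ^ 2 - 1) / 12)) ≤ (1 / (c : ℝ)) * W.re :=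
      mul_le_mul_of_nonneg_left hWre (by positivity)
    refine le_trans ?_ h2
    have h3 : (1 / (c:ℝ)) * (-(((c:ℝ)^2 - 1) / 12)) = -((c:ℝ)/12) + 1/(12*(c:ℝ)) := by
      field_simp
      ring
    have h4 : (0:ℝ) < 1/(12*(c:ℝ)) := by positivity
    rw [h3]
    linarith
  · rw [Complex.ofReal_im, Complex.im_ofReal_mul, hWim, mul_zero]
end
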